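/- arXiv:2207.02748 — 12 statements merged into one kernel-verified Lean document; each statement's English description precedes it below -/
import Mathlib

section
/- For every integer k ≥ 2, the following identity of real polynomials in one variable x holds: (1/(2^k · k · (k-1))) · Σ_{ℓ=0}^{k} C(k,ℓ) · (k-2ℓ)^2 · (1+x)^{k-ℓ} · (1-x)^{ℓ} = x^2 + 1/(k-1). -/
open Polynomial

private lemma s0 {R : Type*} [CommRing R] (a b : R) (n : ℕ) :
    ∑ ℓ ∈ Finset.range (n + 1), (n.choose ℓ : R) * a ^ (n - ℓ) * b ^ ℓ = (a + b) ^ n := by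
  rw [add_comm a b, add_pow]
  exact Finset.sum_congr rfl fun ℓ hℓ => by ring

private lemma s1 {R : Type*} [CommRing R] (a b : R) (n : ℕ) :
    ∑ ℓ ∈ Finset.range (n + 3), ((n + 2).choose ℓ : R) * (ℓ : R) * a ^ (n + 2 - ℓ) * b ^ ℓ
      = ((n : R) + 2) * b * (a + b) ^ (n + 1) := by
  have step : ∀ j ∈ Finset.range (n + 2),
      ((n + 2).choose (j + 1) : R) * ((j + 1 : ℕ) : R) * a ^ (n + 2 - (j + 1)) * b ^ (j + 1)
      = ((n : R) + 2) * b * (((n + 1).choose j : R) * a ^ (n + 1 - j) * b ^ j) := by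
    intro j hj
    have hsub : n + 2 - (j + 1) = n + 1 - j := by omega
    have h := congrArg (Nat.cast (R := R)) (Nat.add_one_mul_choose_eq (n + 1) j)
    push_cast at h
    have hc : ((n + 2).choose (j + 1) : R) * ((j + 1 : ℕ) : R)
        = ((n : R) + 2) * ((n + 1).choose j : R) := by
      push_cast
      linear_combination -h
    rw [hsub]
    calc ((n + 2).choose (j + 1) : R) * ((j + 1 : ℕ) : R) * a ^ (n + 1 - j) * b ^ (j + 1)
        = (((n + 2).choose (j + 1) : R) * ((j + 1 : ℕ) : R)) * (a ^ (n + 1 - j) * b ^ (j + 1)) := by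
          ring
      _ = (((n : R) + 2) * ((n + 1).choose j : R)) * (a ^ (n + 1 - j) * b ^ (j + 1)) := by rw [hc]
      _ = ((n : R) + 2) * b * (((n + 1).choose j : R) * a ^ (n + 1 - j) * b ^ j) := by
          rw [pow_succ]; ring
  rw [Finset.sum_range_succ', Finset.sum_congr rfl step, ← Finset.mul_sum]
  rw [show (∑ j ∈ Finset.range (n + 2), ((n + 1).choose j : R) * a ^ (n + 1 - j) * b ^ j)
      = (a + b) ^ (n + 1) from s0 a b (n + 1)]
  simp

private lemma s2 {R : Type*} [CommRing R] (a b : R) (n : ℕ) :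
    ∑ ℓ ∈ Finset.range (n + 3),
        ((n + 2).choose ℓ : R) * (ℓ : R) * ((ℓ : R) - 1) * a ^ (n + 2 - ℓ) * b ^ ℓ
      = ((n : R) + 2) * ((n : R) + 1) * b ^ 2 * (a + b) ^ n := by
  have key : ∀ j : ℕ, ((n + 2).choose (j + 2) : R) * ((j + 2 : ℕ) : R) * ((j + 1 : ℕ) : R)
      = ((n : R) + 2) * ((n : R) + 1) * (n.choose j : R) := by
    intro j
    have h1 := congrArg (Nat.cast (R := R)) (Nat.add_one_mul_choose_eq (n + 1) (j + 1))
    have h2 := congrArg (Nat.cast (R := R)) (Nat.add_one_mul_choose_eq n j)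
    push_cast at h1 h2 ⊢
    simp only [show n + 1 + 1 = n + 2 from rfl, show j + 1 + 1 = j + 2 from rfl] at h1
    linear_combination (-((j : R) + 1)) * h1 - ((n : R) + 2) * h2
  have step : ∀ j ∈ Finset.range (n + 1),
      ((n + 2).choose (j + 1 + 1) : R) * ((j + 1 + 1 : ℕ) : R) * (((j + 1 + 1 : ℕ) : R) - 1)
        * a ^ (n + 2 - (j + 1 + 1)) * b ^ (j + 1 + 1)
      = ((n : R) + 2) * ((n : R) + 1) * b ^ 2 * ((n.choose j : R) * a ^ (n - j) * b ^ j) := by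
    intro j hj
    have hsub : n + 2 - (j + 1 + 1) = n - j := by omega
    have h3 : ((j + 1 + 1 : ℕ) : R) - 1 = ((j + 1 : ℕ) : R) := by push_cast; ring
    rw [hsub, h3]
    calc ((n + 2).choose (j + 1 + 1) : R) * ((j + 1 + 1 : ℕ) : R) * ((j + 1 : ℕ) : R)
          * a ^ (n - j) * b ^ (j + 1 + 1)
        = (((n + 2).choose (j + 2) : R) * ((j + 2 : ℕ) : R) * ((j + 1 : ℕ) : R))
            * (a ^ (n - j) * b ^ (j + 1 + 1)) := by ring
      _ = (((n : R) + 2) * ((n : R) + 1) * (n.choose j : R)) * (a ^ (n - j) * b ^ (j + 1 + 1)) := by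
            rw [key j]
      _ = ((n : R) + 2) * ((n : R) + 1) * b ^ 2 * ((n.choose j : R) * a ^ (n - j) * b ^ j) := by
            rw [pow_succ, pow_succ]; ring
  rw [Finset.sum_range_succ', Finset.sum_range_succ', Finset.sum_congr rfl step, ← Finset.mul_sum,
    s0 a b n]
  push_cast
  ring

private lemma master {R : Type*} [CommRing R] (a b : R) (n : ℕ) :
    ∑ ℓ ∈ Finset.range (n + 3),
        ((n + 2).choose ℓ : R) * (((n : R) + 2) - 2 * (ℓ : R)) ^ 2 * a ^ (n + 2 - ℓ) * b ^ ℓ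
      = ((n : R) + 2) * ((n : R) + 1) * (a - b) ^ 2 * (a + b) ^ n
        + ((n : R) + 2) * (a + b) ^ (n + 2) := by
  have split : ∀ ℓ ∈ Finset.range (n + 3),
      ((n + 2).choose ℓ : R) * (((n : R) + 2) - 2 * (ℓ : R)) ^ 2 * a ^ (n + 2 - ℓ) * b ^ ℓ
      = 4 * (((n + 2).choose ℓ : R) * (ℓ : R) * ((ℓ : R) - 1) * a ^ (n + 2 - ℓ) * b ^ ℓ)
        + (4 - 4 * ((n : R) + 2)) * (((n + 2).choose ℓ : R) * (ℓ : R) * a ^ (n + 2 - ℓ) * b ^ ℓ)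
        + ((n : R) + 2) ^ 2 * (((n + 2).choose ℓ : R) * a ^ (n + 2 - ℓ) * b ^ ℓ) := by
    intro ℓ hℓ; ring
  have e0 : ∑ ℓ ∈ Finset.range (n + 3), ((n + 2).choose ℓ : R) * a ^ (n + 2 - ℓ) * b ^ ℓ
      = (a + b) ^ (n + 2) := s0 a b (n + 2)
  rw [Finset.sum_congr rfl split, Finset.sum_add_distrib, Finset.sum_add_distrib,
    ← Finset.mul_sum, ← Finset.mul_sum, ← Finset.mul_sum, s2 a b n, s1 a b n, e0]
  ring

theorem stmt_0 (k : ℕ) (hk : 2 ≤ k) :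
    C (1 / (2 ^ k * (k : ℝ) * ((k : ℝ) - 1))) *
      ∑ ℓ ∈ Finset.range (k + 1),
        C ((k.choose ℓ : ℝ) * ((k : ℝ) - 2 * (ℓ : ℝ)) ^ 2) *
          (1 + X) ^ (k - ℓ) * (1 - X) ^ ℓ
    = X ^ 2 + C (1 / ((k : ℝ) - 1)) := by
  obtain ⟨n, rfl⟩ : ∃ n, k = n + 2 := ⟨k - 2, by omega⟩
  have hsum :
      ∑ ℓ ∈ Finset.range (n + 2 + 1),
        C (((n + 2).choose ℓ : ℝ) * (((n + 2 : ℕ) : ℝ) - 2 * (ℓ : ℝ)) ^ 2) *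
          (1 + X) ^ (n + 2 - ℓ) * (1 - X) ^ ℓ
      = ∑ ℓ ∈ Finset.range (n + 3),
        ((n + 2).choose ℓ : ℝ[X]) * (((n : ℝ[X]) + 2) - 2 * (ℓ : ℝ[X])) ^ 2
          * (1 + X) ^ (n + 2 - ℓ) * (1 - X) ^ ℓ := by
    apply Finset.sum_congr rfl
    intro ℓ hℓ
    push_cast
    simp only [map_mul, map_pow, map_sub, map_add, map_ofNat, map_natCast, Polynomial.C_1]
  rw [hsum, master (1 + X) (1 - X) n]
  have hab : (1 + X : ℝ[X]) - (1 - X) = 2 * X := by ring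
  have hab2 : (1 + X : ℝ[X]) + (1 - X) = 2 := by ring
  rw [hab, hab2]
  have inner : ((n : ℝ[X]) + 2) * ((n : ℝ[X]) + 1) * (2 * X) ^ 2 * 2 ^ n
        + ((n : ℝ[X]) + 2) * 2 ^ (n + 2)
      = C (((n : ℝ) + 2) * ((n : ℝ) + 1) * 4 * 2 ^ n) * X ^ 2
        + C (((n : ℝ) + 2) * 2 ^ (n + 2)) := by
    simp only [map_mul, map_add, map_pow, map_ofNat, map_natCast, map_one]
    ring
  rw [inner, mul_add, ← mul_assoc, ← map_mul, ← map_mul]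
  have h1 : ((n + 2 : ℕ) : ℝ) = (n : ℝ) + 2 := by push_cast; ring
  have c1 : 1 / (2 ^ (n + 2) * ((n + 2 : ℕ) : ℝ) * (((n + 2 : ℕ) : ℝ) - 1))
      * (((n : ℝ) + 2) * ((n : ℝ) + 1) * 4 * 2 ^ n) = 1 := by
    rw [h1, show (n : ℝ) + 2 - 1 = (n : ℝ) + 1 from by ring, div_mul_eq_mul_div, one_mul,
      div_eq_one_iff_eq (by positivity : (0:ℝ) < 2 ^ (n + 2) * ((n:ℝ) + 2) * ((n:ℝ) + 1)).ne']
    ring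
  have c2 : 1 / (2 ^ (n + 2) * ((n + 2 : ℕ) : ℝ) * (((n + 2 : ℕ) : ℝ) - 1))
      * (((n : ℝ) + 2) * 2 ^ (n + 2)) = 1 / (((n + 2 : ℕ) : ℝ) - 1) := by
    rw [h1, show (n : ℝ) + 2 - 1 = (n : ℝ) + 1 from by ring, div_mul_eq_mul_div, one_mul,
      div_eq_div_iff (by positivity : (0:ℝ) < 2 ^ (n + 2) * ((n:ℝ) + 2) * ((n:ℝ) + 1)).ne'
        (by positivity : (0:ℝ) < (n:ℝ) + 1).ne']
    ring
  rw [c1, c2, map_one, one_mul]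
end

section
/- Let S be a semiring of a commutative unital ℝ-algebra A. Then the set A^bd(S) of S-bounded elements, consisting of all a ∈ A such that there exists λ > 0 with λ·1 - a ∈ S and λ·1 + a ∈ S, is a unital subalgebra of A. -/
theorem stmt_2 {A : Type*} [CommRing A] [Algebra ℝ A] (S : Set A)
    (hone : (1 : A) ∈ S)
    (hadd : ∀ x ∈ S, ∀ y ∈ S, x + y ∈ S)
    (hsmul : ∀ r : ℝ, 0 ≤ r → ∀ x ∈ S, r • x ∈ S)
    (hmul : ∀ x ∈ S, ∀ y ∈ S, x * y ∈ S) :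
    ∃ B : Subalgebra ℝ A,
      (B : Set A) =
        {a : A | ∃ l : ℝ, 0 < l ∧ l • (1 : A) - a ∈ S ∧ l • (1 : A) + a ∈ S} := by
  have hzero : (0 : A) ∈ S := by
    have := hsmul 0 le_rfl 1 hone
    simpa using this
  have key : ∀ (x : A), (1/2 : ℝ) • ((2:ℝ) • x) = x := by
    intro x
    rw [smul_smul]
    norm_num
  refine ⟨{ carrier := {a : A | ∃ l : ℝ, 0 < l ∧ l • (1 : A) - a ∈ S ∧ l • (1 : A) + a ∈ S}
            one_mem' := ⟨1, one_pos, by simpa using hzero, by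
              simpa using hadd 1 hone 1 hone⟩
            zero_mem' := ⟨1, one_pos, by simpa using hone, by simpa using hone⟩
            mul_mem' := ?_
            add_mem' := ?_
            algebraMap_mem' := ?_ }, rfl⟩
  · rintro a b ⟨l, hl, hl1, hl2⟩ ⟨m, hm, hm1, hm2⟩
    refine ⟨l * m, mul_pos hl hm, ?_, ?_⟩
    · have hs := hadd _ (hmul _ hl1 _ hm2) _ (hmul _ hl2 _ hm1)
      have h2 : (l • (1:A) - a) * (m • (1:A) + b) + (l • (1:A) + a) * (m • (1:A) - b) =
          (2:ℝ) • ((l * m) • (1:A) - a * b) := by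
        simp only [Algebra.smul_def, map_ofNat, map_mul]
        ring
      rw [h2] at hs
      have hs2 := hsmul (1/2) (by norm_num) _ hs
      rwa [key] at hs2
    · have hs := hadd _ (hmul _ hl1 _ hm1) _ (hmul _ hl2 _ hm2)
      have h2 : (l • (1:A) - a) * (m • (1:A) - b) + (l • (1:A) + a) * (m • (1:A) + b) =
          (2:ℝ) • ((l * m) • (1:A) + a * b) := by
        simp only [Algebra.smul_def, map_ofNat, map_mul]
        ring
      rw [h2] at hs
      have hs2 := hsmul (1/2) (by norm_num) _ hs
      rwa [key] at hs2
  · rintro a b ⟨l, hl, hl1, hl2⟩ ⟨m, hm, hm1, hm2⟩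
    refine ⟨l + m, by linarith, ?_, ?_⟩
    · have := hadd _ hl1 _ hm1
      have h : (l + m) • (1 : A) - (a + b) = (l • (1:A) - a) + (m • (1:A) - b) := by
        rw [add_smul]; ring
      rw [h]; exact this
    · have := hadd _ hl2 _ hm2
      have h : (l + m) • (1 : A) + (a + b) = (l • (1:A) + a) + (m • (1:A) + b) := by
        rw [add_smul]; ring
      rw [h]; exact this
  · intro r
    refine ⟨|r| + 1, by positivity, ?_, ?_⟩
    · have h : (|r| + 1) • (1 : A) - algebraMap ℝ A r = (|r| + 1 - r) • (1 : A) := by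
        simp only [Algebra.smul_def, map_sub, map_add, map_one]
        ring
      rw [h]
      exact hsmul _ (by cases abs_cases r <;> linarith) _ hone
    · have h : (|r| + 1) • (1 : A) + algebraMap ℝ A r = (|r| + 1 + r) • (1 : A) := by
        simp only [Algebra.smul_def, map_add, map_one]
        ring
      rw [h]
      exact hsmul _ (by cases abs_cases r <;> linarith) _ hone
end

section
/- Let S be a semiring of a commutative unital ℝ-algebra A, and suppose the algebra A is generated by elements (a_j)_{j∈J} together with 1. If for every j ∈ J there exist α_j > 0 and β_j > 0 with α_j·1 + a_j ∈ S and β_j·1 - a_j ∈ S, then S is Archimedean, i.e., for every a ∈ A there exists λ > 0 with λ·1 - a ∈ S and λ·1 + a ∈ S. -/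
theorem stmt_3 {A : Type*} [CommRing A] [Algebra ℝ A] (S : Set A)
    (hone : (1 : A) ∈ S)
    (hadd : ∀ x ∈ S, ∀ y ∈ S, x + y ∈ S)
    (hsmul : ∀ r : ℝ, 0 ≤ r → ∀ x ∈ S, r • x ∈ S)
    (hmul : ∀ x ∈ S, ∀ y ∈ S, x * y ∈ S)
    {J : Type*} (a : J → A)
    (hgen : Algebra.adjoin ℝ (Set.range a) = ⊤)
    (hbd : ∀ j : J, ∃ α β : ℝ, 0 < α ∧ 0 < β ∧
      α • (1 : A) + a j ∈ S ∧ β • (1 : A) - a j ∈ S) :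
    ∀ x : A, ∃ l : ℝ, 0 < l ∧ l • (1 : A) - x ∈ S ∧ l • (1 : A) + x ∈ S := by
  have halg : ∀ r : ℝ, ∃ l : ℝ, 0 < l ∧ l • (1 : A) - algebraMap ℝ A r ∈ S ∧
      l • (1 : A) + algebraMap ℝ A r ∈ S := by
    intro r
    refine ⟨|r| + 1, by positivity, ?_, ?_⟩
    · have : (|r| + 1) • (1 : A) - algebraMap ℝ A r = (|r| + 1 - r) • (1 : A) := by
        simp only [Algebra.smul_def, map_sub, map_add]; ring
      rw [this]
      exact hsmul _ (by nlinarith [abs_nonneg r, le_abs_self r]) _ hone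
    · have : (|r| + 1) • (1 : A) + algebraMap ℝ A r = (|r| + 1 + r) • (1 : A) := by
        simp only [Algebra.smul_def, map_add]; ring
      rw [this]
      exact hsmul _ (by nlinarith [abs_nonneg r, neg_abs_le r]) _ hone
  set B : Subalgebra ℝ A :=
    { carrier := {x | ∃ l : ℝ, 0 < l ∧ l • (1 : A) - x ∈ S ∧ l • (1 : A) + x ∈ S}
      algebraMap_mem' := halg
      zero_mem' := by simpa using halg 0
      one_mem' := by simpa using halg 1
      add_mem' := by
        rintro x y ⟨l, hl, hl1, hl2⟩ ⟨m, hm, hm1, hm2⟩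
        refine ⟨l + m, by linarith, ?_, ?_⟩
        · have : (l + m) • (1 : A) - (x + y) = (l • 1 - x) + (m • 1 - y) := by
            rw [add_smul]; abel
          rw [this]; exact hadd _ hl1 _ hm1
        · have : (l + m) • (1 : A) + (x + y) = (l • 1 + x) + (m • 1 + y) := by
            rw [add_smul]; abel
          rw [this]; exact hadd _ hl2 _ hm2
      mul_mem' := by
        rintro x y ⟨l, hl, hl1, hl2⟩ ⟨m, hm, hm1, hm2⟩
        refine ⟨l * m, mul_pos hl hm, ?_, ?_⟩
        · have key : (l • (1 : A) - x) * (m • 1 + y) + (l • 1 + x) * (m • 1 - y)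
              = (2 : ℝ) • ((l * m) • (1 : A) - x * y) := by
            simp only [Algebra.smul_def, map_mul, map_ofNat]; ring
          have h := hsmul (1/2) (by norm_num) _
            (hadd _ (hmul _ hl1 _ hm2) _ (hmul _ hl2 _ hm1))
          rw [key, smul_smul] at h
          norm_num at h
          exact h
        · have key : (l • (1 : A) - x) * (m • 1 - y) + (l • 1 + x) * (m • 1 + y)
              = (2 : ℝ) • ((l * m) • (1 : A) + x * y) := by
            simp only [Algebra.smul_def, map_mul, map_ofNat]; ring
          have h := hsmul (1/2) (by norm_num) _
            (hadd _ (hmul _ hl1 _ hm1) _ (hmul _ hl2 _ hm2))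
          rw [key, smul_smul] at h
          norm_num at h
          exact h }
  intro x
  have hx : x ∈ B := by
    have hsub : Set.range a ⊆ (B : Set A) := by
      rintro _ ⟨j, rfl⟩
      obtain ⟨α, β, hα, hβ, h1, h2⟩ := hbd j
      refine ⟨max α β, lt_max_of_lt_left hα, ?_, ?_⟩
      · have : (max α β) • (1 : A) - a j = (max α β - β) • (1 : A) + (β • 1 - a j) := by
          rw [sub_smul]; abel
        rw [this]
        exact hadd _ (hsmul _ (by simp [sub_nonneg, le_max_right]) _ hone) _ h2
      · have : (max α β) • (1 : A) + a j = (max α β - α) • (1 : A) + (α • 1 + a j) := by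
          rw [sub_smul]; abel
        rw [this]
        exact hadd _ (hsmul _ (by simp [sub_nonneg, le_max_left]) _ hone) _ h1
    have := Algebra.adjoin_le hsub
    rw [hgen] at this
    exact this (Algebra.mem_top)
  exact hx
end

section
/- Let S be a generating semiring of a commutative unital ℝ-algebra A (i.e., S - S = A) and let C be an S-module. Then S† is again a generating semiring of A and C† is an S†-module, where X† := {a ∈ A : ∃x ∈ X such that a + εx ∈ X for all ε > 0}. -/
lemma dagger_sub {A : Type*} [CommRing A] [Algebra ℝ A] (T : Set A)
    (hsmul : ∀ r : ℝ, 0 ≤ r → ∀ x ∈ T, r • x ∈ T) {a : A} (ha : a ∈ T) :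
    a ∈ {a : A | ∃ x ∈ T, ∀ ε : ℝ, 0 < ε → a + ε • x ∈ T} := by
  refine ⟨a, ha, fun ε hε => ?_⟩
  have : a + ε • a = (1 + ε) • a := by rw [add_smul, one_smul]
  rw [this]
  exact hsmul _ (by linarith) _ ha

lemma dagger_add {A : Type*} [CommRing A] [Algebra ℝ A] (T : Set A)
    (hadd : ∀ x ∈ T, ∀ y ∈ T, x + y ∈ T) :
    ∀ x ∈ {a : A | ∃ x ∈ T, ∀ ε : ℝ, 0 < ε → a + ε • x ∈ T},
    ∀ y ∈ {a : A | ∃ x ∈ T, ∀ ε : ℝ, 0 < ε → a + ε • x ∈ T},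
    x + y ∈ {a : A | ∃ x ∈ T, ∀ ε : ℝ, 0 < ε → a + ε • x ∈ T} := by
  rintro x ⟨u, hu, hxu⟩ y ⟨v, hv, hyv⟩
  refine ⟨u + v, hadd _ hu _ hv, fun ε hε => ?_⟩
  have : x + y + ε • (u + v) = (x + ε • u) + (y + ε • v) := by
    rw [smul_add]; ring
  rw [this]
  exact hadd _ (hxu ε hε) _ (hyv ε hε)

lemma dagger_smul {A : Type*} [CommRing A] [Algebra ℝ A] (T : Set A)
    (hone : (1 : A) ∈ T)
    (hsmul : ∀ r : ℝ, 0 ≤ r → ∀ x ∈ T, r • x ∈ T) :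
    ∀ r : ℝ, 0 ≤ r →
    ∀ x ∈ {a : A | ∃ x ∈ T, ∀ ε : ℝ, 0 < ε → a + ε • x ∈ T},
    r • x ∈ {a : A | ∃ x ∈ T, ∀ ε : ℝ, 0 < ε → a + ε • x ∈ T} := by
  rintro r hr x ⟨u, hu, hxu⟩
  rcases eq_or_lt_of_le hr with h0 | h0
  · refine ⟨1, hone, fun ε hε => ?_⟩
    rw [← h0, zero_smul, zero_add]
    exact hsmul _ hε.le _ hone
  · refine ⟨r • u, hsmul _ hr _ hu, fun ε hε => ?_⟩
    have : r • x + ε • r • u = r • (x + ε • u) := by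
      rw [smul_add, smul_comm]
    rw [this]
    exact hsmul _ hr _ (hxu ε hε)

/-- The key multiplication lemma, stated for a pair (S, C) with S * C ⊆ C. -/
lemma dagger_mul {A : Type*} [CommRing A] [Algebra ℝ A] (S C : Set A)
    (hCadd : ∀ x ∈ C, ∀ y ∈ C, x + y ∈ C)
    (hCsmul : ∀ r : ℝ, 0 ≤ r → ∀ x ∈ C, r • x ∈ C)
    (hSC : ∀ s ∈ S, ∀ c ∈ C, s * c ∈ C) :
    ∀ a ∈ {a : A | ∃ x ∈ S, ∀ ε : ℝ, 0 < ε → a + ε • x ∈ S},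
    ∀ c ∈ {a : A | ∃ x ∈ C, ∀ ε : ℝ, 0 < ε → a + ε • x ∈ C},
    a * c ∈ {a : A | ∃ x ∈ C, ∀ ε : ℝ, 0 < ε → a + ε • x ∈ C} := by
  rintro a ⟨u, hu, hau⟩ c ⟨v, hv, hcv⟩
  have hau1 : a + u ∈ S := by simpa using hau 1 one_pos
  have hcv1 : c + v ∈ C := by simpa using hcv 1 one_pos
  set w : A := (a + u) * v + (c + v) * u with hw
  have hwC : w ∈ C := hCadd _ (hSC _ hau1 _ hv) _ (mul_comm u (c+v) ▸ hSC _ hu _ hcv1)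
  have key : ∀ ε : ℝ, 0 < ε → ε ≤ 2 → a * c + ε • w ∈ C := by
    intro ε hε hε2
    have hid : a * c + ε • w = (a + ε • u) * (c + ε • v) + (ε * (2 - ε)) • (u * v) := by
      rw [hw]
      simp only [Algebra.smul_def, map_mul, map_sub, map_ofNat]
      ring
    rw [hid]
    exact hCadd _ (hSC _ (hau ε hε) _ (hcv ε hε)) _
      (hCsmul _ (mul_nonneg hε.le (by linarith)) _ (hSC _ hu _ hv))
  refine ⟨w, hwC, fun ε hε => ?_⟩
  rcases le_or_gt ε 2 with h | h
  · exact key ε hε h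
  · have hid : a * c + ε • w = (a * c + (2 : ℝ) • w) + (ε - 2) • w := by
      simp only [Algebra.smul_def, map_sub, map_ofNat]; ring
    rw [hid]
    exact hCadd _ (key 2 two_pos le_rfl) _ (hCsmul _ (by linarith) _ hwC)

theorem stmt_5 {A : Type*} [CommRing A] [Algebra ℝ A] (S C : Set A)
    (hSone : (1 : A) ∈ S)
    (hSadd : ∀ x ∈ S, ∀ y ∈ S, x + y ∈ S)
    (hSsmul : ∀ r : ℝ, 0 ≤ r → ∀ x ∈ S, r • x ∈ S)
    (hSmul : ∀ x ∈ S, ∀ y ∈ S, x * y ∈ S)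
    (hgen : ∀ a : A, ∃ x ∈ S, ∃ y ∈ S, a = x - y)
    (hCone : (1 : A) ∈ C)
    (hCadd : ∀ x ∈ C, ∀ y ∈ C, x + y ∈ C)
    (hCsmul : ∀ r : ℝ, 0 ≤ r → ∀ x ∈ C, r • x ∈ C)
    (hSC : ∀ s ∈ S, ∀ c ∈ C, s * c ∈ C) :
    (let Sd : Set A := {a : A | ∃ x ∈ S, ∀ ε : ℝ, 0 < ε → a + ε • x ∈ S}
     let Cd : Set A := {a : A | ∃ x ∈ C, ∀ ε : ℝ, 0 < ε → a + ε • x ∈ C}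
     ((1 : A) ∈ Sd ∧ (∀ x ∈ Sd, ∀ y ∈ Sd, x + y ∈ Sd) ∧
        (∀ r : ℝ, 0 ≤ r → ∀ x ∈ Sd, r • x ∈ Sd) ∧
        (∀ x ∈ Sd, ∀ y ∈ Sd, x * y ∈ Sd) ∧
        (∀ a : A, ∃ x ∈ Sd, ∃ y ∈ Sd, a = x - y)) ∧
      ((1 : A) ∈ Cd ∧ (∀ x ∈ Cd, ∀ y ∈ Cd, x + y ∈ Cd) ∧
        (∀ r : ℝ, 0 ≤ r → ∀ x ∈ Cd, r • x ∈ Cd) ∧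
        (∀ s ∈ Sd, ∀ c ∈ Cd, s * c ∈ Cd))) := by
  intro Sd Cd
  refine ⟨⟨dagger_sub S hSsmul hSone, dagger_add S hSadd, dagger_smul S hSone hSsmul,
      dagger_mul S S hSadd hSsmul hSmul, fun a => ?_⟩,
    dagger_sub C hCsmul hCone, dagger_add C hCadd, dagger_smul C hCone hCsmul,
    dagger_mul S C hCadd hCsmul hSC⟩
  obtain ⟨x, hx, y, hy, hxy⟩ := hgen a
  exact ⟨x, dagger_sub S hSsmul hx, y, dagger_sub S hSsmul hy, hxy⟩
end

section
/- Let S be an Archimedean semiring of a commutative unital ℝ-algebra A. Then for every a ∈ A and every ε > 0, the element a² + ε·1 belongs to S; consequently a² ∈ S† for all a ∈ A. -/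
open Finset

private lemma sum_choose_smul' {A : Type*} [CommRing A] [Algebra ℝ A] (u v : A) (n : ℕ) :
    ∑ k ∈ Finset.range (n+1), ((n.choose k : ℝ)) • (u ^ k * v ^ (n-k)) = (u + v) ^ n := by
  rw [add_pow]
  refine Finset.sum_congr rfl fun k _ => ?_
  rw [Nat.cast_smul_eq_nsmul, nsmul_eq_mul]
  ring

private lemma coeff_nonneg' (ε : ℝ) (hε : 0 < ε) (m : ℕ) (hm : 1 ≤ ε * (m+1)) (j : ℕ) :
    4 * (m.choose j : ℝ) ≤ (1+ε) * ((m+2).choose (j+1) : ℝ) := by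
  by_cases hj : j ≤ m
  · have h1 : (m+2) * ((m+1).choose j) = (m+2).choose (j+1) * (j+1) :=
      Nat.add_one_mul_choose_eq (m+1) j
    have h2 : (m+1) * (m.choose j) = (m+1).choose (j+1) * (j+1) :=
      Nat.add_one_mul_choose_eq m j
    have h3 : (m+1).choose (j+1) * (j+1) = (m+1).choose j * (m+1-j) :=
      Nat.choose_succ_right_eq (m+1) j
    have h23 : (m+1) * (m.choose j) = (m+1).choose j * (m+1-j) := h2.trans h3
    have hsub : ((m+1-j : ℕ) : ℝ) = (m:ℝ) + 1 - (j:ℝ) := by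
      rw [Nat.cast_sub (by omega)]; push_cast; ring
    have h1' : ((m:ℝ)+2) * ((m+1).choose j : ℝ) = ((m+2).choose (j+1) : ℝ) * ((j:ℝ)+1) := by
      have := congrArg (Nat.cast : ℕ → ℝ) h1
      push_cast at this
      linarith [this]
    have h23' : ((m:ℝ)+1) * (m.choose j : ℝ) = ((m+1).choose j : ℝ) * ((m:ℝ)+1-(j:ℝ)) := by
      have := congrArg (Nat.cast : ℕ → ℝ) h23
      rw [Nat.cast_mul, Nat.cast_mul, hsub] at this
      push_cast at this
      linarith [this]
    set C1 := (m.choose j : ℝ) with hC1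
    set C2 := ((m+1).choose j : ℝ) with hC2
    set C3 := ((m+2).choose (j+1) : ℝ) with hC3
    set M := (m : ℝ) with hM
    set J := (j : ℝ) with hJ
    have hJM : J ≤ M := by rw [hM, hJ]; exact_mod_cast hj
    have hJ0 : 0 ≤ J := by rw [hJ]; positivity
    have hC3n : (0:ℝ) ≤ C3 := Nat.cast_nonneg _
    have key1 : 4*(M+1-J)*(J+1) ≤ (M+2)^2 := by nlinarith [sq_nonneg ((M+1-J)-(J+1))]
    have e1 : 4*C1*(M+1)*(M+2) = 4*(M+1-J)*(J+1)*C3 := by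
      linear_combination (4*(M+2))*h23' + (4*(M+1-J))*h1'
    have e2 : 4*C1*(M+1)*(M+2) ≤ (M+2)^2*C3 := by
      rw [e1]
      have := mul_le_mul_of_nonneg_right key1 hC3n
      linarith [this]
    have hM2 : (0:ℝ) < M+2 := by rw [hM]; positivity
    have hM1 : (0:ℝ) < M+1 := by rw [hM]; positivity
    have e3 : 4*C1*(M+1) ≤ (M+2)*C3 := by
      rw [← mul_le_mul_iff_of_pos_right hM2]
      calc 4*C1*(M+1)*(M+2) ≤ (M+2)^2*C3 := e2
        _ = (M+2)*C3*(M+2) := by ring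
    have e4 : (M+2) ≤ (1+ε)*(M+1) := by nlinarith [hm]
    have e5 : 4*C1*(M+1) ≤ ((1+ε)*C3)*(M+1) := by
      calc 4*C1*(M+1) ≤ (M+2)*C3 := e3
        _ ≤ ((1+ε)*(M+1))*C3 := mul_le_mul_of_nonneg_right e4 hC3n
        _ = ((1+ε)*C3)*(M+1) := by ring
    exact le_of_mul_le_mul_right e5 hM1
  · have : m.choose j = 0 := Nat.choose_eq_zero_of_lt (by omega)
    rw [this]
    have h0 : (0:ℝ) ≤ ((m+2).choose (j+1) : ℝ) := Nat.cast_nonneg _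
    have := mul_nonneg (by linarith : (0:ℝ) ≤ 1+ε) h0
    push_cast
    linarith

private lemma key_lemma {A : Type*} [CommRing A] [Algebra ℝ A] (S : Set A)
    (hone : (1 : A) ∈ S)
    (hadd : ∀ x ∈ S, ∀ y ∈ S, x + y ∈ S)
    (hsmul : ∀ r : ℝ, 0 ≤ r → ∀ x ∈ S, r • x ∈ S)
    (hmul : ∀ x ∈ S, ∀ y ∈ S, x * y ∈ S)
    (b : A) (hu : (1:A) - b ∈ S) (hv : (1:A) + b ∈ S)
    (ε : ℝ) (hε : 0 < ε) : b ^ 2 + ε • (1:A) ∈ S := by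
  have hzero : (0:A) ∈ S := by simpa using hsmul 0 le_rfl 1 hone
  have hpow : ∀ x ∈ S, ∀ n : ℕ, x ^ n ∈ S := by
    intro x hx n
    induction n with
    | zero => simpa using hone
    | succ n ih => rw [pow_succ]; exact hmul _ ih _ hx
  set m := Nat.ceil (1/ε) with hm_def
  have hm : 1 ≤ ε * (m+1) := by
    have h1 : (1/ε : ℝ) ≤ m := Nat.le_ceil _
    have : 1 ≤ ε * m := by
      calc (1:ℝ) = ε * (1/ε) := by field_simp
      _ ≤ ε * m := by apply mul_le_mul_of_nonneg_left h1 hε.le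
    nlinarith [this]
  set u := (1:A) - b with hu_def
  set v := (1:A) + b with hv_def
  set D : ℕ → ℝ := fun k => match k with
    | 0 => 0
    | j+1 => (m.choose j : ℝ) with hD_def
  set c : ℕ → ℝ := fun k => ((1+ε) * ((m+2).choose k : ℝ) - 4 * D k) / 2 ^ (m+2) with hc_def
  have hc : ∀ k, 0 ≤ c k := by
    intro k
    apply div_nonneg _ (by positivity)
    match k with
    | 0 => simp [hD_def]; positivity
    | j+1 =>
      have := coeff_nonneg' ε hε m hm j
      simp only [hD_def]
      linarith [this]
  have hmem : ∑ k ∈ Finset.range (m+3), c k • (u ^ k * v ^ (m+2-k)) ∈ S := by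
    refine Finset.sum_induction _ (· ∈ S) (fun a b ha hb => hadd a ha b hb) hzero ?_
    intro k _
    exact hsmul _ (hc k) _ (hmul _ (hpow u hu k) _ (hpow v hv (m+2-k)))
  have huv : u + v = (2:ℝ) • (1:A) := by rw [two_smul, hu_def, hv_def]; ring
  have hpow2 : ∀ n : ℕ, (u + v) ^ n = ((2:ℝ)^n) • (1:A) := by
    intro n; rw [huv, smul_pow, one_pow]
  have heq : ∑ k ∈ Finset.range (m+3), c k • (u ^ k * v ^ (m+2-k)) = b ^ 2 + ε • (1:A) := by
    have split : ∀ k, c k • (u ^ k * v ^ (m+2-k)) =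
        (((1+ε)/2^(m+2)) * ((m+2).choose k : ℝ)) • (u ^ k * v ^ (m+2-k)) -
        ((4/2^(m+2)) * D k) • (u ^ k * v ^ (m+2-k)) := by
      intro k
      rw [← sub_smul]
      congr 1
      simp only [hc_def]
      ring
    calc ∑ k ∈ Finset.range (m+3), c k • (u ^ k * v ^ (m+2-k))
        = ∑ k ∈ Finset.range (m+3),
            ((((1+ε)/2^(m+2)) * ((m+2).choose k : ℝ)) • (u ^ k * v ^ (m+2-k)) -
            ((4/2^(m+2)) * D k) • (u ^ k * v ^ (m+2-k))) := by
          exact Finset.sum_congr rfl fun k _ => split k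
      _ = (∑ k ∈ Finset.range (m+3),
            (((1+ε)/2^(m+2)) * ((m+2).choose k : ℝ)) • (u ^ k * v ^ (m+2-k))) -
          (∑ k ∈ Finset.range (m+3),
            ((4/2^(m+2)) * D k) • (u ^ k * v ^ (m+2-k))) := Finset.sum_sub_distrib _ _
      _ = (1+ε) • (1:A) - u * v := by
          congr 1
          · -- first sum
            simp_rw [mul_smul]
            rw [← Finset.smul_sum]
            have : ∑ k ∈ Finset.range (m+3), ((m+2).choose k : ℝ) • (u ^ k * v ^ (m+2-k))
                = (u + v) ^ (m+2) := sum_choose_smul' u v (m+2)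
            rw [this, hpow2, smul_smul, div_mul_cancel₀]
            positivity
          · -- second sum
            rw [Finset.sum_range_succ']
            have hD0 : (4/2^(m+2) : ℝ) * D 0 = 0 := by simp [hD_def]
            rw [hD0, zero_smul, add_zero]
            rw [Finset.sum_range_succ]
            have hDtop : (4/2^(m+2) : ℝ) * D (m+1+1) = 0 := by
              simp only [hD_def]
              rw [Nat.choose_eq_zero_of_lt (by omega)]
              simp
            rw [hDtop, zero_smul, add_zero]
            have hterm : ∀ i ∈ Finset.range (m+1),
                ((4/2^(m+2) : ℝ) * D (i+1)) • (u ^ (i+1) * v ^ (m+2-(i+1))) =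
                (u * v) * (((4/2^(m+2) : ℝ)) • ((m.choose i : ℝ) • (u ^ i * v ^ (m-i)))) := by
              intro i hi
              have hi' : i ≤ m := by
                have := Finset.mem_range.mp hi; omega
              have hexp : m+2-(i+1) = (m-i)+1 := by omega
              rw [hexp]
              simp only [hD_def]
              rw [smul_smul, mul_smul_comm]
              congr 1
              ring
            rw [Finset.sum_congr rfl hterm, ← Finset.mul_sum, ← Finset.smul_sum]
            have : ∑ i ∈ Finset.range (m+1), ((m.choose i : ℝ)) • (u ^ i * v ^ (m-i))
                = (u + v) ^ m := sum_choose_smul' u v m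
            rw [this, hpow2, smul_smul]
            have h4 : (4/2^(m+2) : ℝ) * 2^m = 1 := by
              rw [pow_add]; field_simp; ring
            rw [h4, one_smul, mul_one]
      _ = b ^ 2 + ε • (1:A) := by
          have huvb : u * v = 1 - b^2 := by rw [hu_def, hv_def]; ring
          rw [huvb, add_smul, one_smul]
          abel
  rwa [heq] at hmem

theorem stmt_6 {A : Type*} [CommRing A] [Algebra ℝ A] (S : Set A)
    (hone : (1 : A) ∈ S)
    (hadd : ∀ x ∈ S, ∀ y ∈ S, x + y ∈ S)
    (hsmul : ∀ r : ℝ, 0 ≤ r → ∀ x ∈ S, r • x ∈ S)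
    (hmul : ∀ x ∈ S, ∀ y ∈ S, x * y ∈ S)
    (harch : ∀ a : A, ∃ l : ℝ, 0 < l ∧ l • (1 : A) - a ∈ S ∧ l • (1 : A) + a ∈ S) :
    ∀ a : A, (∀ ε : ℝ, 0 < ε → a ^ 2 + ε • (1 : A) ∈ S) ∧
      a ^ 2 ∈ {x : A | ∀ ε : ℝ, 0 < ε → x + ε • (1 : A) ∈ S} := by
  intro a
  have main : ∀ ε : ℝ, 0 < ε → a ^ 2 + ε • (1:A) ∈ S := by
    intro ε hε
    obtain ⟨l, hl, h1, h2⟩ := harch a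
    have hb1 : (1:A) - l⁻¹ • a ∈ S := by
      have := hsmul l⁻¹ (by positivity) _ h1
      rwa [smul_sub, smul_smul, inv_mul_cancel₀ hl.ne', one_smul] at this
    have hb2 : (1:A) + l⁻¹ • a ∈ S := by
      have := hsmul l⁻¹ (by positivity) _ h2
      rwa [smul_add, smul_smul, inv_mul_cancel₀ hl.ne', one_smul] at this
    have hk := key_lemma S hone hadd hsmul hmul (l⁻¹ • a) hb1 hb2 (ε / l^2) (by positivity)
    have hmem := hsmul (l^2) (by positivity) _ hk
    have e : (l^2) • ((l⁻¹ • a) ^ 2 + (ε/l^2) • (1:A)) = a ^ 2 + ε • (1:A) := by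
      rw [smul_add, smul_pow, smul_smul, smul_smul]
      congr 1
      · rw [show l^2 * l⁻¹^2 = 1 by field_simp, one_smul]
      · rw [show l^2 * (ε/l^2) = ε by field_simp]
    rwa [e] at hmem
  exact ⟨main, fun ε hε => main ε hε⟩
end

section
/- Let S be an Archimedean semiring of a commutative unital ℝ-algebra A and let C be an S-module. Then C† = {a ∈ A : a + ε·1 ∈ C for all ε > 0} is an Archimedean quadratic module of A. -/
open Finset
set_option maxHeartbeats 1000000

section aux
variable {A : Type*} [CommRing A] [Algebra ℝ A]

lemma my_zero_mem (S : Set A) (hSone : (1:A) ∈ S)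
    (hSsmul : ∀ r : ℝ, 0 ≤ r → ∀ x ∈ S, r • x ∈ S) : (0:A) ∈ S := by
  simpa using hSsmul 0 le_rfl 1 hSone

lemma my_sum_mem (S : Set A) (hSone : (1:A) ∈ S)
    (hSadd : ∀ x ∈ S, ∀ y ∈ S, x + y ∈ S)
    (hSsmul : ∀ r : ℝ, 0 ≤ r → ∀ x ∈ S, r • x ∈ S)
    (k : ℕ) (f : ℕ → A) (hf : ∀ i ∈ range k, f i ∈ S) :
    (∑ i ∈ range k, f i) ∈ S := by
  induction k with
  | zero => simpa using my_zero_mem S hSone hSsmul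
  | succ k ih =>
    rw [sum_range_succ]
    exact hSadd _ (ih fun i hi => hf i (mem_range.mpr (Nat.lt_succ_of_lt (mem_range.mp hi)))) _
      (hf k (self_mem_range_succ k))

lemma my_pow_mem (S : Set A) (hSone : (1:A) ∈ S)
    (hSmul : ∀ x ∈ S, ∀ y ∈ S, x * y ∈ S) (x : A) (hx : x ∈ S) :
    ∀ k : ℕ, x ^ k ∈ S := by
  intro k; induction k with
  | zero => simpa using hSone
  | succ k ih => rw [pow_succ]; exact hSmul _ ih _ hx

lemma coef_nonneg (n j : ℕ) (e : ℝ) (hj : j ≤ n) (he : 1/((n:ℝ)+1) ≤ e) :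
    0 ≤ (1+e) * ((n+2).choose (j+1) : ℝ) - 4 * (n.choose j : ℝ) := by
  have e1 : (n+1) * n.choose j = (n+1).choose (j+1) * (j+1) := Nat.add_one_mul_choose_eq n j
  have e2 : (n+1).choose (j+1) * (n+2) = (n+2).choose (j+1) * (n+2 - (j+1)) :=
    Nat.choose_mul_succ_eq (n+1) (j+1)
  have hsub : (n:ℕ)+2 - (j+1) = n+1-j := by omega
  rw [hsub] at e2
  have e1' : ((n:ℝ)+1) * (n.choose j : ℝ) = ((n+1).choose (j+1) : ℝ) * ((j:ℝ)+1) := by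
    exact_mod_cast congrArg (Nat.cast : ℕ → ℝ) e1
  have e2' : ((n+1).choose (j+1) : ℝ) * ((n:ℝ)+2) = ((n+2).choose (j+1) : ℝ) * ((n:ℝ)+1-j) := by
    have hc : ((n+1-j : ℕ) : ℝ) = (n:ℝ)+1-j := by
      rw [Nat.cast_sub (by omega : j ≤ n+1)]; push_cast; ring
    have := congrArg (Nat.cast : ℕ → ℝ) e2
    push_cast at this
    rw [← hc]; exact_mod_cast e2
  have hC : (0:ℝ) ≤ ((n+2).choose (j+1) : ℝ) := Nat.cast_nonneg _
  have hn1 : (0:ℝ) < (n:ℝ)+1 := by positivity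
  have hn2 : (0:ℝ) < (n:ℝ)+2 := by positivity
  have key : 4 * ((n:ℝ)+1) * ((n:ℝ)+2) * (n.choose j : ℝ)
      ≤ ((n:ℝ)+2)^2 * ((n+2).choose (j+1) : ℝ) := by
    have heq : 4 * ((n:ℝ)+1) * ((n:ℝ)+2) * (n.choose j : ℝ)
        = 4 * ((j:ℝ)+1) * ((n:ℝ)+1-j) * ((n+2).choose (j+1) : ℝ) := by
      calc 4 * ((n:ℝ)+1) * ((n:ℝ)+2) * (n.choose j : ℝ)
          = 4 * (((n:ℝ)+1) * (n.choose j : ℝ)) * ((n:ℝ)+2) := by ring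
        _ = 4 * (((n+1).choose (j+1) : ℝ) * ((j:ℝ)+1)) * ((n:ℝ)+2) := by rw [e1']
        _ = 4 * ((j:ℝ)+1) * (((n+1).choose (j+1) : ℝ) * ((n:ℝ)+2)) := by ring
        _ = 4 * ((j:ℝ)+1) * (((n+2).choose (j+1) : ℝ) * ((n:ℝ)+1-j)) := by rw [e2']
        _ = 4 * ((j:ℝ)+1) * ((n:ℝ)+1-j) * ((n+2).choose (j+1) : ℝ) := by ring
    rw [heq]
    have hjn : (j:ℝ) ≤ (n:ℝ) := by exact_mod_cast hj
    nlinarith [sq_nonneg ((n:ℝ) - 2*(j:ℝ)), hC]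
  have hee : 1 ≤ e * ((n:ℝ)+1) := by
    rw [div_le_iff₀ hn1] at he; linarith
  have h5 : ((n:ℝ)+2)^2 * ((n+2).choose (j+1) : ℝ)
      ≤ (1+e) * ((n:ℝ)+1) * ((n:ℝ)+2) * ((n+2).choose (j+1) : ℝ) := by
    nlinarith [mul_nonneg (mul_nonneg (by linarith : (0:ℝ) ≤ e*((n:ℝ)+1) - 1) hn2.le) hC]
  have h6 : (((n:ℝ)+1)*((n:ℝ)+2)) * (4 * (n.choose j : ℝ))
      ≤ (((n:ℝ)+1)*((n:ℝ)+2)) * ((1+e) * ((n+2).choose (j+1) : ℝ)) := by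
    nlinarith [key, h5]
  have h7 := le_of_mul_le_mul_left h6 (by positivity : (0:ℝ) < ((n:ℝ)+1)*((n:ℝ)+2))
  linarith

lemma cert_identity (u v : A) (e : ℝ) (n : ℕ) :
    (∑ j ∈ range (n+1),
      ((1+e) * ((n+2).choose (j+1) : ℝ) - 4 * (n.choose j : ℝ)) • (u^(j+1) * v^(n+1-j)))
      + (1+e) • v^(n+2) + (1+e) • u^(n+2)
    = (1+e) • (u+v)^(n+2) - (4:ℝ) • (u*v*(u+v)^n) := by
  have h1 : (u+v)^(n+2) = ∑ i ∈ range (n+3), ((n+2).choose i : ℝ) • (u^i * v^(n+2-i)) := by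
    rw [add_pow]
    refine sum_congr rfl fun i _ => ?_
    rw [Nat.cast_smul_eq_nsmul, nsmul_eq_mul, mul_comm]
  have h2 : u*v*(u+v)^n = ∑ j ∈ range (n+1), (n.choose j : ℝ) • (u^(j+1) * v^(n+1-j)) := by
    rw [add_pow, Finset.mul_sum]
    refine sum_congr rfl fun j hj => ?_
    have hj' : j ≤ n := Nat.lt_succ_iff.mp (mem_range.mp hj)
    rw [Nat.cast_smul_eq_nsmul, nsmul_eq_mul]
    have h : n + 1 - j = (n - j) + 1 := by omega
    rw [h]
    ring
  have h3 : ∀ j ∈ range (n+1),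
      ((1+e) * ((n+2).choose (j+1) : ℝ) - 4 * (n.choose j : ℝ)) • (u^(j+1) * v^(n+1-j))
      = (1+e) • (((n+2).choose (j+1) : ℝ) • (u^(j+1) * v^(n+1-j)))
        - (4:ℝ) • ((n.choose j : ℝ) • (u^(j+1) * v^(n+1-j))) := by
    intro j _
    rw [smul_smul, smul_smul, ← sub_smul]
  conv_rhs => rw [h1, show n + 3 = (n+2)+1 from rfl, sum_range_succ, sum_range_succ', h2]
  rw [sum_congr rfl h3, Finset.sum_sub_distrib]
  simp only [Nat.succ_sub_succ, Nat.choose_self, Nat.choose_zero_right, Nat.cast_one, one_smul,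
    pow_zero, mul_one, one_mul, Nat.sub_zero, Nat.add_sub_cancel, Nat.sub_self]
  rw [smul_add, smul_add, Finset.smul_sum, Finset.smul_sum]
  abel


lemma key_sq (S : Set A) (hSone : (1:A) ∈ S)
    (hSadd : ∀ x ∈ S, ∀ y ∈ S, x + y ∈ S)
    (hSsmul : ∀ r : ℝ, 0 ≤ r → ∀ x ∈ S, r • x ∈ S)
    (hSmul : ∀ x ∈ S, ∀ y ∈ S, x * y ∈ S)
    (a : A) (l ε : ℝ) (hl : 0 < l) (hε : 0 < ε)
    (hu : l • (1:A) - a ∈ S) (hv : l • (1:A) + a ∈ S) :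
    a^2 + ε • (1:A) ∈ S := by
  obtain ⟨n, hn⟩ : ∃ n : ℕ, l^2 ≤ ε * ((n:ℝ)+1) := by
    refine ⟨⌈l^2/ε⌉₊, ?_⟩
    have h1 : l^2/ε ≤ (⌈l^2/ε⌉₊ : ℝ) := Nat.le_ceil _
    have h2 : l^2/ε ≤ (⌈l^2/ε⌉₊ : ℝ) + 1 := by linarith
    calc l^2 = (l^2/ε) * ε := by field_simp
      _ ≤ ((⌈l^2/ε⌉₊ : ℝ) + 1) * ε := by
          exact mul_le_mul_of_nonneg_right h2 hε.le
      _ = ε * ((⌈l^2/ε⌉₊ : ℝ) + 1) := by ring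
  have hl2 : (0:ℝ) < l^2 := by positivity
  set e := ε / l^2 with he
  have he0 : 0 < e := by positivity
  have he1 : 1/((n:ℝ)+1) ≤ e := by
    rw [div_le_iff₀ (by positivity : (0:ℝ) < (n:ℝ)+1), he, div_mul_eq_mul_div,
      le_div_iff₀ hl2]
    linarith [hn]
  set u := l • (1:A) - a with hudef
  set v := l • (1:A) + a with hvdef
  have hw : ∀ j : ℕ, u^(j+1) * v^(n+1-j) ∈ S := fun j =>
    hSmul _ (my_pow_mem S hSone hSmul u hu _) _ (my_pow_mem S hSone hSmul v hv _)
  have hT : ((∑ j ∈ range (n+1),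
      ((1+e) * ((n+2).choose (j+1) : ℝ) - 4 * (n.choose j : ℝ)) • (u^(j+1) * v^(n+1-j)))
      + (1+e) • v^(n+2) + (1+e) • u^(n+2)) ∈ S := by
    refine hSadd _ (hSadd _ ?_ _ (hSsmul _ (by linarith) _ (my_pow_mem S hSone hSmul v hv _)))
      _ (hSsmul _ (by linarith) _ (my_pow_mem S hSone hSmul u hu _))
    refine my_sum_mem S hSone hSadd hSsmul _ _ fun j hj => ?_
    exact hSsmul _ (coef_nonneg n j e (Nat.lt_succ_iff.mp (mem_range.mp hj)) he1) _ (hw j)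
  rw [cert_identity] at hT
  have hne : (2*l)^n ≠ 0 := by positivity
  have hkey : a^2 + ε • (1:A)
      = (1/(4*(2*l)^n)) • ((1+e) • (u+v)^(n+2) - (4:ℝ) • (u*v*(u+v)^n)) := by
    have huv : u + v = (2*l) • (1:A) := by
      rw [hudef, hvdef]; module
    have huv2 : u * v = (l^2) • (1:A) - a^2 := by
      rw [hudef, hvdef]
      have h1 : (l • (1:A) - a) * (l • (1:A) + a) = (l • (1:A)) * (l • (1:A)) - a * a := by
        ring
      rw [h1, smul_mul_smul, mul_one, ← pow_two, ← pow_two]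
    rw [huv, huv2, smul_pow, one_pow, smul_pow, one_pow]
    rw [show ((l^2) • (1:A) - a^2) * ((2*l)^n • (1:A)) = (2*l)^n • ((l^2) • (1:A) - a^2) by
      rw [mul_smul_comm, mul_one]]
    match_scalars
    · field_simp
    · field_simp [he]
      rw [he]; field_simp
      ring
  rw [hkey]
  exact hSsmul _ (by positivity) _ hT

end aux

theorem stmt_7 {A : Type*} [CommRing A] [Algebra ℝ A] (S C : Set A)
    (hSone : (1 : A) ∈ S)
    (hSadd : ∀ x ∈ S, ∀ y ∈ S, x + y ∈ S)
    (hSsmul : ∀ r : ℝ, 0 ≤ r → ∀ x ∈ S, r • x ∈ S)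
    (hSmul : ∀ x ∈ S, ∀ y ∈ S, x * y ∈ S)
    (harch : ∀ a : A, ∃ l : ℝ, 0 < l ∧ l • (1 : A) - a ∈ S ∧ l • (1 : A) + a ∈ S)
    (hCone : (1 : A) ∈ C)
    (hCadd : ∀ x ∈ C, ∀ y ∈ C, x + y ∈ C)
    (hCsmul : ∀ r : ℝ, 0 ≤ r → ∀ x ∈ C, r • x ∈ C)
    (hSC : ∀ s ∈ S, ∀ c ∈ C, s * c ∈ C) :
    (let Cd : Set A := {a : A | ∀ ε : ℝ, 0 < ε → a + ε • (1 : A) ∈ C}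
     (1 : A) ∈ Cd ∧ (∀ x ∈ Cd, ∀ y ∈ Cd, x + y ∈ Cd) ∧
       (∀ r : ℝ, 0 ≤ r → ∀ x ∈ Cd, r • x ∈ Cd) ∧
       (∀ a : A, ∀ q ∈ Cd, a ^ 2 * q ∈ Cd) ∧
       (∀ a : A, ∃ l : ℝ, 0 < l ∧ l • (1 : A) - a ∈ Cd ∧ l • (1 : A) + a ∈ Cd)) := by
  intro Cd
  have hSsubC : ∀ s ∈ S, s ∈ C := fun s hs => by
    simpa using hSC s hs 1 hCone
  have hSsubCd : ∀ s ∈ S, s ∈ Cd := by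
    intro s hs ε hε
    exact hCadd _ (hSsubC s hs) _ (hSsubC _ (hSsmul ε hε.le 1 hSone))
  refine ⟨?_, ?_, ?_, ?_, ?_⟩
  · -- 1 ∈ Cd
    intro ε hε
    have : (1:A) + ε • (1:A) = (1+ε) • (1:A) := by module
    rw [this]
    exact hCsmul _ (by linarith) _ hCone
  · -- additive
    intro x hx y hy ε hε
    have h : x + y + ε • (1:A) = (x + (ε/2) • (1:A)) + (y + (ε/2) • (1:A)) := by
      match_scalars <;> ring
    rw [h]
    exact hCadd _ (hx _ (by linarith)) _ (hy _ (by linarith))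
  · -- smul
    intro r hr x hx ε hε
    rcases eq_or_lt_of_le hr with h0 | h0
    · have : r • x + ε • (1:A) = ε • (1:A) := by rw [← h0, zero_smul, zero_add]
      rw [this]
      exact hCsmul _ hε.le _ hCone
    · have h : r • x + ε • (1:A) = r • (x + (ε/r) • (1:A)) := by
        rw [smul_add, smul_smul, mul_div_cancel₀ _ (ne_of_gt h0)]
      rw [h]
      exact hCsmul _ hr _ (hx _ (by positivity))
  · -- quadratic
    intro a q hq ε hε
    obtain ⟨l, hl, hu, hv⟩ := harch a
    obtain ⟨m, hm, hm1, _⟩ := harch q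
    set δ : ℝ := min 1 (ε / (1 + m + l^2)) with hδdef
    have hden : (0:ℝ) < 1 + m + l^2 := by positivity
    have hδ0 : 0 < δ := lt_min one_pos (by positivity)
    have hδ1 : δ ≤ 1 := min_le_left _ _
    have hδ2 : δ ≤ ε / (1 + m + l^2) := min_le_right _ _
    have hδε : δ * (δ + m + l^2) ≤ ε := by
      have h1 : δ * (δ + m + l^2) ≤ δ * (1 + m + l^2) := by
        apply mul_le_mul_of_nonneg_left _ hδ0.le
        linarith
      have h2 : δ * (1 + m + l^2) ≤ ε := by
        rw [← le_div_iff₀ hden] at *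
        exact hδ2
      linarith
    -- s1 = a^2 + δ•1 ∈ S
    have hs1 : a^2 + δ • (1:A) ∈ S := key_sq S hSone hSadd hSsmul hSmul a l δ hl hδ0 hu hv
    -- c1 = q + δ•1 ∈ C
    have hc1 : q + δ • (1:A) ∈ C := hq δ hδ0
    have hp1 : (a^2 + δ • (1:A)) * (q + δ • (1:A)) ∈ C := hSC _ hs1 _ hc1
    -- δ•(m•1 - q) ∈ C
    have hp2 : δ • (m • (1:A) - q) ∈ C := hCsmul _ hδ0.le _ (hSsubC _ hm1)
    -- δ•(l^2•1 - a^2) ∈ C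
    have hla : (l^2) • (1:A) - a^2 ∈ S := by
      have h := hSmul _ hu _ hv
      have heq : (l • (1:A) - a) * (l • (1:A) + a) = (l^2) • (1:A) - a^2 := by
        have h1 : (l • (1:A) - a) * (l • (1:A) + a) = (l • (1:A)) * (l • (1:A)) - a * a := by
          ring
        rw [h1, smul_mul_smul_comm, mul_one, ← pow_two, ← pow_two]
      rwa [heq] at h
    have hp3 : δ • ((l^2) • (1:A) - a^2) ∈ C := hCsmul _ hδ0.le _ (hSsubC _ hla)
    -- remainder constant
    have hr : 0 ≤ ε - δ * (δ + m + l^2) := by linarith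
    have hp4 : (ε - δ * (δ + m + l^2)) • (1:A) ∈ C := hCsmul _ hr _ hCone
    have hsum : ((a^2 + δ • (1:A)) * (q + δ • (1:A)) + δ • (m • (1:A) - q)
        + δ • ((l^2) • (1:A) - a^2)) + (ε - δ * (δ + m + l^2)) • (1:A) ∈ C :=
      hCadd _ (hCadd _ (hCadd _ hp1 _ hp2) _ hp3) _ hp4
    have hfinal : ((a^2 + δ • (1:A)) * (q + δ • (1:A)) + δ • (m • (1:A) - q)
        + δ • ((l^2) • (1:A) - a^2)) + (ε - δ * (δ + m + l^2)) • (1:A)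
        = a^2 * q + ε • (1:A) := by
      have hexp : (a^2 + δ • (1:A)) * (q + δ • (1:A))
          = a^2 * q + δ • a^2 + δ • q + (δ*δ) • (1:A) := by
        simp only [mul_add, add_mul, smul_mul_assoc, mul_smul_comm, one_mul, mul_one, smul_add,
          smul_smul]
        abel
      rw [hexp]
      match_scalars <;> ring
    rwa [hfinal] at hsum
  · -- Archimedean
    intro a
    obtain ⟨l, hl, hu, hv⟩ := harch a
    exact ⟨l, hl, hSsubCd _ hu, hSsubCd _ hv⟩
end

section
/- Let Q be an Archimedean quadratic module of a commutative unital ℝ-algebra A. Then for all p, q ∈ Q and all ε > 0, pq + ε·1 ∈ Q. Consequently Q† is an Archimedean preordering (an Archimedean quadratic module closed under multiplication). -/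
theorem stmt_8 {A : Type*} [CommRing A] [Algebra ℝ A] (Q : Set A)
    (hone : (1 : A) ∈ Q)
    (hadd : ∀ x ∈ Q, ∀ y ∈ Q, x + y ∈ Q)
    (hsmul : ∀ r : ℝ, 0 ≤ r → ∀ x ∈ Q, r • x ∈ Q)
    (hsq : ∀ a : A, ∀ q ∈ Q, a ^ 2 * q ∈ Q)
    (harch : ∀ a : A, ∃ l : ℝ, 0 < l ∧ l • (1 : A) - a ∈ Q ∧ l • (1 : A) + a ∈ Q) :
    (∀ p ∈ Q, ∀ q ∈ Q, ∀ ε : ℝ, 0 < ε → p * q + ε • (1 : A) ∈ Q) ∧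
    (let Qd : Set A := {a : A | ∀ ε : ℝ, 0 < ε → a + ε • (1 : A) ∈ Q}
     (1 : A) ∈ Qd ∧ (∀ x ∈ Qd, ∀ y ∈ Qd, x + y ∈ Qd) ∧
       (∀ r : ℝ, 0 ≤ r → ∀ x ∈ Qd, r • x ∈ Qd) ∧
       (∀ a : A, ∀ q ∈ Qd, a ^ 2 * q ∈ Qd) ∧
       (∀ x ∈ Qd, ∀ y ∈ Qd, x * y ∈ Qd) ∧
       (∀ a : A, ∃ l : ℝ, 0 < l ∧ l • (1 : A) - a ∈ Qd ∧ l • (1 : A) + a ∈ Qd)) := by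
  have h2 : (2:A) * (algebraMap ℝ A (1/2)) = 1 := by
    rw [show (2:A) = algebraMap ℝ A 2 from (map_ofNat _ 2).symm, ← map_mul]; norm_num
  have h4 : (4:A) * (algebraMap ℝ A (1/4)) = 1 := by
    rw [show (4:A) = algebraMap ℝ A 4 from (map_ofNat _ 4).symm, ← map_mul]; norm_num
  have hsm1 : ∀ r : ℝ, 0 ≤ r → r • (1:A) ∈ Q := fun r hr => hsmul r hr 1 hone
  -- if 1 ± t ∈ Q then 1 - t² ∈ Q
  have hsqb : ∀ t : A, (1:A) - t ∈ Q → (1:A) + t ∈ Q → (1:A) - t^2 ∈ Q := by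
    intro t ht1 ht2
    have key : (1:A) - t^2
        = ((1:ℝ)/2)•((1-t)^2*(1+t)) + ((1:ℝ)/2)•((1+t)^2*(1-t)) := by
      simp only [Algebra.smul_def]
      linear_combination (t^2-1)*h2
    rw [key]
    exact hadd _ (hsmul _ (by norm_num) _ (hsq (1-t) _ ht2))
      _ (hsmul _ (by norm_num) _ (hsq (1+t) _ ht1))
  -- normalized product estimate, by induction
  have hnorm : ∀ n : ℕ, ∀ p ∈ Q, (1:A) - p ∈ Q → ∀ q ∈ Q, (1:A) - q ∈ Q →
      p * q + (((1:ℝ)/2)^n * ((1:ℝ)/4)) • (1:A) ∈ Q := by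
    intro n
    induction n with
    | zero =>
      intro p hp hp1 q hq hq1
      have h2p : (1:A) - (1-2*p) ∈ Q := by
        rw [show (1:A) - (1-2*p) = p + p from by ring]; exact hadd _ hp _ hp
      have h2p' : (1:A) + (1-2*p) ∈ Q := by
        rw [show (1:A) + (1-2*p) = (1-p) + (1-p) from by ring]; exact hadd _ hp1 _ hp1
      have key : p*q + (((1:ℝ)/2)^0 * ((1:ℝ)/4)) • (1:A)
          = p^2*q + (((1:ℝ)/4)•q + (((1:ℝ)/4)•((1:A)-(1-2*p)^2)
            + ((1:ℝ)/4)•((1-2*p)^2*(1-q)))) := by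
        simp only [pow_zero, one_mul, Algebra.smul_def]
        linear_combination (p^2*q - p*q)*h4
      rw [key]
      exact hadd _ (hsq p q hq) _ (hadd _ (hsmul _ (by norm_num) _ hq)
        _ (hadd _ (hsmul _ (by norm_num) _ (hsqb _ h2p h2p'))
          _ (hsmul _ (by norm_num) _ (hsq (1-2*p) _ hq1))))
    | succ n ih =>
      intro p hp hp1 q hq hq1
      have hu : 2*(p*(1-p)) ∈ Q := by
        rw [show 2*(p*(1-p)) = (p^2*(1-p)+(1-p)^2*p) + (p^2*(1-p)+(1-p)^2*p) from by ring]
        exact hadd _ (hadd _ (hsq p _ hp1) _ (hsq (1-p) _ hp))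
          _ (hadd _ (hsq p _ hp1) _ (hsq (1-p) _ hp))
      have hu1 : (1:A) - 2*(p*(1-p)) ∈ Q := by
        rw [show (1:A) - 2*(p*(1-p)) = (1-p)^2*1 + p^2*1 from by ring]
        exact hadd _ (hsq (1-p) _ hone) _ (hsq p _ hone)
      have hx := ih _ hu hu1 q hq hq1
      have key : p*q + (((1:ℝ)/2)^(n+1) * ((1:ℝ)/4)) • (1:A)
          = p^2*q + ((1:ℝ)/2) • ((2*(p*(1-p)))*q
              + (((1:ℝ)/2)^n * ((1:ℝ)/4)) • (1:A)) := by
        simp only [Algebra.smul_def, map_mul, map_pow]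
        linear_combination (p^2*q - p*q)*h2
      rw [key]
      exact hadd _ (hsq p q hq) _ (hsmul _ (by norm_num) _ hx)
  -- normalized product with arbitrary ε
  have hnorm' : ∀ p ∈ Q, (1:A) - p ∈ Q → ∀ q ∈ Q, (1:A) - q ∈ Q →
      ∀ ε : ℝ, 0 < ε → p * q + ε • (1:A) ∈ Q := by
    intro p hp hp1 q hq hq1 ε hε
    obtain ⟨n, hn⟩ := exists_pow_lt_of_lt_one hε (by norm_num : (1:ℝ)/2 < 1)
    have hc : ((1:ℝ)/2)^n * ((1:ℝ)/4) ≤ ε := by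
      nlinarith [pow_nonneg (by norm_num : (0:ℝ) ≤ 1/2) n]
    have key : p*q + ε • (1:A)
        = (p*q + (((1:ℝ)/2)^n * ((1:ℝ)/4)) • (1:A))
          + (ε - ((1:ℝ)/2)^n * ((1:ℝ)/4)) • (1:A) := by
      rw [add_assoc, ← add_smul]; ring_nf
    rw [key]
    exact hadd _ (hnorm n p hp hp1 q hq hq1) _ (hsm1 _ (by linarith))
  -- part 1
  have part1 : ∀ p ∈ Q, ∀ q ∈ Q, ∀ ε : ℝ, 0 < ε → p * q + ε • (1 : A) ∈ Q := by
    intro p hp q hq ε hε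
    obtain ⟨l, hl, hlp, -⟩ := harch p
    obtain ⟨m, hm, hmq, -⟩ := harch q
    have hp' : l⁻¹ • p ∈ Q := hsmul _ (by positivity) p hp
    have hp1 : (1:A) - l⁻¹ • p ∈ Q := by
      have := hsmul l⁻¹ (by positivity) _ hlp
      rwa [smul_sub, smul_smul, inv_mul_cancel₀ hl.ne', one_smul] at this
    have hq' : m⁻¹ • q ∈ Q := hsmul _ (by positivity) q hq
    have hq1 : (1:A) - m⁻¹ • q ∈ Q := by
      have := hsmul m⁻¹ (by positivity) _ hmq
      rwa [smul_sub, smul_smul, inv_mul_cancel₀ hm.ne', one_smul] at this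
    have hn := hnorm' _ hp' hp1 _ hq' hq1 (ε/(l*m)) (by positivity)
    have hmem := hsmul (l*m) (by positivity) _ hn
    have e1 : (l⁻¹ • p) * (m⁻¹ • q) = (l⁻¹*m⁻¹) • (p*q) := by
      rw [smul_mul_assoc, mul_smul_comm, smul_smul]
    rw [e1, smul_add, smul_smul, smul_smul,
      show l*m*(l⁻¹*m⁻¹) = 1 from by field_simp,
      show l*m*(ε/(l*m)) = ε from by field_simp, one_smul] at hmem
    exact hmem
  refine ⟨part1, ?_⟩
  intro Qd
  have hQsub : ∀ x ∈ Q, x ∈ Qd := fun x hx ε hε => hadd x hx _ (hsm1 ε hε.le)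
  refine ⟨?_, ?_, ?_, ?_, ?_, ?_⟩
  · exact hQsub 1 hone
  · -- addition
    intro x hx y hy ε hε
    have key : x + y + ε • (1:A) = (x + (ε/2) • (1:A)) + (y + (ε/2) • (1:A)) := by
      match_scalars <;> ring
    rw [key]
    exact hadd _ (hx _ (half_pos hε)) _ (hy _ (half_pos hε))
  · -- scalar multiplication
    intro r hr x hx ε hε
    rcases hr.eq_or_lt with h | h
    · rw [← h, zero_smul, zero_add]; exact hsm1 ε hε.le
    · have key : r • x + ε • (1:A) = r • (x + (ε/r) • (1:A)) := by
        rw [smul_add, smul_smul, mul_div_cancel₀ _ h.ne']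
      rw [key]
      exact hsmul r hr _ (hx _ (by positivity))
  · -- multiplication by squares
    intro a q hq ε hε
    obtain ⟨l, hl, hla, hla'⟩ := harch a
    have ht1 : (1:A) - l⁻¹ • a ∈ Q := by
      have := hsmul l⁻¹ (by positivity) _ hla
      rwa [smul_sub, smul_smul, inv_mul_cancel₀ hl.ne', one_smul] at this
    have ht2 : (1:A) + l⁻¹ • a ∈ Q := by
      have := hsmul l⁻¹ (by positivity) _ hla'
      rwa [smul_add, smul_smul, inv_mul_cancel₀ hl.ne', one_smul] at this
    have hB : (l^2) • (1:A) - a^2 ∈ Q := by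
      have := hsmul (l^2) (by positivity) _ (hsqb _ ht1 ht2)
      rwa [smul_sub, smul_pow, smul_smul,
        show l^2*(l⁻¹)^2 = 1 from by field_simp, one_smul] at this
    set δ : ℝ := ε/(2*l^2) with hδdef
    have hδ : 0 < δ := by positivity
    have key : a^2*q + ε • (1:A)
        = a^2*(q + δ • (1:A)) + (δ • ((l^2) • (1:A) - a^2) + (ε - δ*l^2) • (1:A)) := by
      simp only [mul_add, mul_smul_comm, mul_one, smul_sub, smul_smul]
      match_scalars <;> ring
    rw [key]
    have hnn : (0:ℝ) ≤ ε - δ*l^2 := by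
      rw [hδdef]; rw [div_mul_eq_mul_div, mul_comm]
      have : l^2*ε/(2*l^2) = ε/2 := by field_simp
      rw [this]; linarith
    exact hadd _ (hsq a _ (hq δ hδ)) _ (hadd _ (hsmul δ hδ.le _ hB) _ (hsm1 _ hnn))
  · -- multiplication
    intro x hx y hy ε hε
    obtain ⟨ν, hν, hνs, -⟩ := harch (x + y)
    set δ : ℝ := min 1 (ε/(2*(ν+1))) with hδdef
    have hδ : 0 < δ := lt_min one_pos (by positivity)
    have hδ1 : δ ≤ 1 := min_le_left _ _
    have hδ2 : δ * (2*(ν+1)) ≤ ε := by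
      have := min_le_right 1 (ε/(2*(ν+1)))
      calc δ * (2*(ν+1)) ≤ (ε/(2*(ν+1))) * (2*(ν+1)) := by
            apply mul_le_mul_of_nonneg_right (by rw [hδdef]; exact this) (by positivity)
        _ = ε := by field_simp
    have hnn : (0:ℝ) ≤ ε/2 - (δ*ν + δ^2) := by nlinarith
    have m1 : (x + δ • (1:A))*(y + δ • (1:A)) + (ε/2) • (1:A) ∈ Q :=
      part1 _ (hx δ hδ) _ (hy δ hδ) (ε/2) (half_pos hε)
    have key : x*y + ε • (1:A)
        = ((x + δ • (1:A))*(y + δ • (1:A)) + (ε/2) • (1:A))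
          + (δ • (ν • (1:A) - (x+y)) + (ε/2 - (δ*ν + δ^2)) • (1:A)) := by
      simp only [add_mul, mul_add, mul_smul_comm, smul_mul_assoc, smul_smul,
        mul_one, one_mul, smul_sub, smul_add]
      match_scalars <;> ring
    rw [key]
    exact hadd _ m1 _ (hadd _ (hsmul δ hδ.le _ hνs) _ (hsm1 _ hnn))
  · -- Archimedean
    intro a
    obtain ⟨l, hl, h1, h2'⟩ := harch a
    exact ⟨l, hl, hQsub _ h1, hQsub _ h2'⟩
end

section
/- Let G be a subset of the space of affine-linear polynomials on ℝ^d and let S(G) be the semiring of ℝ[x_1,...,x_d] generated by G. If K(G) = {t ∈ ℝ^d : g(t) ≥ 0 for all g ∈ G} is non-empty and compact, then S(G) is Archimedean. -/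
open MvPolynomial

/-- The semiring (preprime) of `ℝ[x_1,…,x_d]` generated by a set `G`:
the smallest subset containing `G ∪ {1}` that is closed under addition,
multiplication and multiplication by nonnegative real scalars. -/
def semiringGen {A : Type*} [CommRing A] [Algebra ℝ A] (G : Set A) : Set A :=
  ⋂₀ {S : Set A | (1 : A) ∈ S ∧ G ⊆ S ∧ (∀ x ∈ S, ∀ y ∈ S, x + y ∈ S) ∧
    (∀ x ∈ S, ∀ y ∈ S, x * y ∈ S) ∧ (∀ r : ℝ, 0 ≤ r → ∀ x ∈ S, r • x ∈ S)}

namespace Stmt11Aux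

variable {A : Type*} [CommRing A] [Algebra ℝ A] {G : Set A}

lemma sg_one : (1 : A) ∈ semiringGen G :=
  Set.mem_sInter.mpr fun _ hS => hS.1

lemma sg_mem {g : A} (hg : g ∈ G) : g ∈ semiringGen G :=
  Set.mem_sInter.mpr fun _ hS => hS.2.1 hg

lemma sg_add {x y : A} (hx : x ∈ semiringGen G) (hy : y ∈ semiringGen G) :
    x + y ∈ semiringGen G :=
  Set.mem_sInter.mpr fun S hS =>
    hS.2.2.1 x (Set.mem_sInter.mp hx S hS) y (Set.mem_sInter.mp hy S hS)

lemma sg_mul {x y : A} (hx : x ∈ semiringGen G) (hy : y ∈ semiringGen G) :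
    x * y ∈ semiringGen G :=
  Set.mem_sInter.mpr fun S hS =>
    hS.2.2.2.1 x (Set.mem_sInter.mp hx S hS) y (Set.mem_sInter.mp hy S hS)

lemma sg_smul {r : ℝ} (hr : 0 ≤ r) {x : A} (hx : x ∈ semiringGen G) :
    r • x ∈ semiringGen G :=
  Set.mem_sInter.mpr fun S hS => hS.2.2.2.2 r hr x (Set.mem_sInter.mp hx S hS)

/-! ### monomial classification and degree-one reconstruction -/

lemma mono_classify {d : ℕ} (m : Fin d →₀ ℕ) (hm : (m.sum fun _ e => e) ≤ 1) :
    m = 0 ∨ ∃ i, m = Finsupp.single i 1 := by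
  rcases eq_or_ne m 0 with h | h
  · exact Or.inl h
  right
  obtain ⟨i, hi⟩ := Finsupp.ne_iff.mp h
  simp only [Finsupp.coe_zero, Pi.zero_apply] at hi
  have hi' : i ∈ m.support := Finsupp.mem_support_iff.mpr hi
  have h1 : m i ≤ m.sum fun _ e => e := Finset.single_le_sum (fun _ _ => Nat.zero_le _) hi'
  have hmi : m i = 1 := le_antisymm (h1.trans hm) (Nat.one_le_iff_ne_zero.mpr hi)
  refine ⟨i, Finsupp.ext fun j => ?_⟩
  rcases eq_or_ne j i with rfl | hj
  · simp [hmi]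
  · simp only [Finsupp.single_apply, if_neg (Ne.symm hj)]
    by_contra hj0
    have hj' : j ∈ m.support := Finsupp.mem_support_iff.mpr hj0
    have : 2 ≤ m.sum fun _ e => e := by
      have hsub : ({i, j} : Finset (Fin d)) ⊆ m.support := by
        intro x hx; simp at hx; rcases hx with rfl | rfl <;> assumption
      calc 2 ≤ m i + m j := by
              have : m j ≠ 0 := hj0
              omega
        _ = ∑ x ∈ ({i, j} : Finset (Fin d)), m x := (Finset.sum_pair hj.symm).symm
        _ ≤ ∑ x ∈ m.support, m x := Finset.sum_le_sum_of_subset hsub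
        _ = m.sum fun _ e => e := rfl
    omega

lemma deg1_eq {d : ℕ} (p : MvPolynomial (Fin d) ℝ) (hp : p.totalDegree ≤ 1) :
    p = C (coeff 0 p) + ∑ i, C (coeff (Finsupp.single i 1) p) * X i := by
  have hne : ∀ i : Fin d, Finsupp.single i (1 : ℕ) ≠ 0 :=
    fun i => fun h => one_ne_zero (Finsupp.single_eq_zero.mp h)
  apply MvPolynomial.ext
  intro m
  rw [coeff_add, coeff_C, coeff_sum]
  simp only [coeff_C_mul, coeff_X']
  by_cases hm : (m.sum fun _ e => e) ≤ 1
  · rcases mono_classify m hm with rfl | ⟨i, rfl⟩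
    · rw [Finset.sum_eq_zero (fun j _ => by rw [if_neg (hne j), mul_zero])]
      simp
    · rw [if_neg (Ne.symm (hne i)), zero_add,
        Finset.sum_eq_single i (fun j _ hji => by
          rw [if_neg, mul_zero]
          intro h
          have := DFunLike.congr_fun h j
          simp [Finsupp.single_apply, hji, Ne.symm hji] at this)
          (fun h => absurd (Finset.mem_univ i) h)]
      rw [if_pos rfl, mul_one]
  · have h1 : coeff m p = 0 := by
      by_contra h
      exact hm (le_trans (le_totalDegree (Finsupp.mem_support_iff.mpr h)) hp)
    have h2 : m ≠ 0 := by rintro rfl; simp at hm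
    have h3 : ∀ i : Fin d, Finsupp.single i 1 ≠ m := by
      rintro i rfl
      simp [Finsupp.sum_single_index] at hm
    rw [h1, if_neg (Ne.symm h2),
      Finset.sum_eq_zero (fun j _ => by rw [if_neg (h3 j), mul_zero])]
    simp

/-! ### the coefficient space -/

variable (d : ℕ)

noncomputable def toP (v : ℝ × (Fin d → ℝ)) : MvPolynomial (Fin d) ℝ :=
  C v.1 + ∑ i, C (v.2 i) * X i

noncomputable def cf (p : MvPolynomial (Fin d) ℝ) : ℝ × (Fin d → ℝ) :=
  (coeff 0 p, fun i => coeff (Finsupp.single i 1) p)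

def evB (t : Fin d → ℝ) (v : ℝ × (Fin d → ℝ)) : ℝ := v.1 + ∑ i, v.2 i * t i

variable {d}

lemma eval_toP (t : Fin d → ℝ) (v : ℝ × (Fin d → ℝ)) : eval t (toP d v) = evB d t v := by
  simp [toP, evB]

lemma toP_cf {p : MvPolynomial (Fin d) ℝ} (hp : p.totalDegree ≤ 1) : toP d (cf d p) = p :=
  (deg1_eq p hp).symm

lemma eval_eq_evB {p : MvPolynomial (Fin d) ℝ} (hp : p.totalDegree ≤ 1) (t : Fin d → ℝ) :
    eval t p = evB d t (cf d p) := by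
  conv_lhs => rw [← toP_cf hp]
  exact eval_toP t _

lemma toP_add (x y : ℝ × (Fin d → ℝ)) : toP d (x + y) = toP d x + toP d y := by
  simp only [toP, Prod.fst_add, Prod.snd_add, Pi.add_apply, map_add, add_mul,
    Finset.sum_add_distrib]
  ring

lemma toP_smul (c : ℝ) (x : ℝ × (Fin d → ℝ)) : toP d (c • x) = c • toP d x := by
  simp only [toP, Prod.smul_fst, Prod.smul_snd, Pi.smul_apply, smul_eq_mul, map_mul,
    MvPolynomial.smul_eq_C_mul, mul_add, Finset.mul_sum]
  ring_nf

lemma evB_add (t : Fin d → ℝ) (x y : ℝ × (Fin d → ℝ)) :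
    evB d t (x + y) = evB d t x + evB d t y := by
  simp only [evB, Prod.fst_add, Prod.snd_add, Pi.add_apply, add_mul, Finset.sum_add_distrib]
  ring

lemma evB_smul (t : Fin d → ℝ) (c : ℝ) (x : ℝ × (Fin d → ℝ)) :
    evB d t (c • x) = c * evB d t x := by
  simp only [evB, Prod.smul_fst, Prod.smul_snd, Pi.smul_apply, smul_eq_mul, mul_add,
    Finset.mul_sum, mul_assoc]

lemma L_expand (L : (ℝ × (Fin d → ℝ)) →L[ℝ] ℝ) (z : ℝ × (Fin d → ℝ)) :
    L z = z.1 * L ((1:ℝ), (0 : Fin d → ℝ)) + ∑ i, z.2 i * L ((0:ℝ), (Pi.single i 1 : Fin d → ℝ)) := by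
  have hz : z = z.1 • ((1 : ℝ), (0 : Fin d → ℝ))
      + ∑ i, z.2 i • (((0 : ℝ), (Pi.single i (1:ℝ) : Fin d → ℝ)) : ℝ × (Fin d → ℝ)) := by
    have hsingle : ∀ i : Fin d, z.2 i • (Pi.single i (1:ℝ) : Fin d → ℝ)
        = Pi.single i (z.2 i) := by
      intro i
      ext j
      rcases eq_or_ne j i with rfl | hj
      · simp
      · simp [Pi.single_apply, hj]
    refine Prod.ext ?_ ?_
    · simp [Prod.fst_sum]
    · simp only [Prod.snd_add, Prod.smul_snd, smul_zero, Prod.snd_sum, zero_add]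
      rw [Finset.sum_congr rfl (fun i _ => hsingle i)]
      exact (Finset.univ_sum_single z.2).symm
  conv_lhs => rw [hz]
  rw [map_add, map_smul, map_sum]
  simp only [map_smul, smul_eq_mul]

/-! ### the cone -/

variable (d) (G : Set (MvPolynomial (Fin d) ℝ))

noncomputable def CE : Submodule {c : ℝ // 0 ≤ c} (ℝ × (Fin d → ℝ)) :=
  Submodule.span {c : ℝ // 0 ≤ c} (insert ((1:ℝ), (0 : Fin d → ℝ)) (cf d '' G))

variable {d G}

lemma smul_nn (c : ℝ) (hc : 0 ≤ c) (x : ℝ × (Fin d → ℝ)) :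
    (⟨c, hc⟩ : {c : ℝ // 0 ≤ c}) • x = c • x := rfl

lemma CE_convex : Convex ℝ (CE d G : Set (ℝ × (Fin d → ℝ))) := by
  intro x hx y hy a b ha hb _
  have := Submodule.add_mem (CE d G)
    (Submodule.smul_mem _ (⟨a, ha⟩ : {c : ℝ // 0 ≤ c}) hx)
    (Submodule.smul_mem _ (⟨b, hb⟩ : {c : ℝ // 0 ≤ c}) hy)
  rwa [smul_nn, smul_nn] at this

lemma one_mem_CE : ((1:ℝ), (0 : Fin d → ℝ)) ∈ CE d G :=
  Submodule.subset_span (Set.mem_insert _ _)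

lemma cf_mem_CE {g : MvPolynomial (Fin d) ℝ} (hg : g ∈ G) : cf d g ∈ CE d G :=
  Submodule.subset_span (Set.mem_insert_of_mem _ ⟨g, hg, rfl⟩)

lemma toP_mem_sg (hG : ∀ g ∈ G, g.totalDegree ≤ 1) {v : ℝ × (Fin d → ℝ)}
    (hv : v ∈ CE d G) : toP d v ∈ semiringGen G := by
  induction hv using Submodule.span_induction with
  | mem x hx =>
    rcases hx with rfl | ⟨g, hg, rfl⟩
    · have : toP d ((1:ℝ), (0 : Fin d → ℝ)) = 1 := by simp [toP]
      rw [this]; exact sg_one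
    · rw [toP_cf (hG g hg)]; exact sg_mem hg
  | zero =>
    have : toP d (0 : ℝ × (Fin d → ℝ)) = (0:ℝ) • 1 := by simp [toP]
    rw [this]; exact sg_smul le_rfl sg_one
  | add x y _ _ hx hy => rw [toP_add]; exact sg_add hx hy
  | smul c x _ hx =>
    obtain ⟨c, hc⟩ := c
    rw [smul_nn, toP_smul]
    exact sg_smul hc hx

/-! ### separation -/

lemma ray_false {K : Set (Fin d → ℝ)} (hKc : IsCompact K) {t0 : Fin d → ℝ} (ht0 : t0 ∈ K)
    {v : Fin d → ℝ} (hv : v ≠ 0) (h : ∀ s : ℝ, 0 ≤ s → t0 + s • v ∈ K) : False := by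
  obtain ⟨R, hR⟩ := isBounded_iff_forall_norm_le.mp hKc.isBounded
  have hR0 : 0 ≤ R := le_trans (norm_nonneg t0) (hR t0 ht0)
  have hvn : (0:ℝ) < ‖v‖ := norm_pos_iff.mpr hv
  set s : ℝ := (2 * R + 1) / ‖v‖ with hs
  have hs0 : (0:ℝ) ≤ s := by positivity
  have h1 : ‖t0 + s • v‖ ≤ R := hR _ (h s hs0)
  have h2 : ‖s • v‖ ≤ ‖t0 + s • v‖ + ‖t0‖ := by
    calc ‖s • v‖ = ‖(t0 + s • v) - t0‖ := by ring_nf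
      _ ≤ ‖t0 + s • v‖ + ‖t0‖ := norm_sub_le _ _
  have h3 : ‖s • v‖ = 2 * R + 1 := by
    rw [norm_smul, Real.norm_eq_abs, abs_of_nonneg hs0, hs, div_mul_cancel₀ _ (ne_of_gt hvn)]
  have h4 : ‖t0‖ ≤ R := hR t0 ht0
  linarith

lemma ray_in_K (hG : ∀ g ∈ G, g.totalDegree ≤ 1)
    (L : (ℝ × (Fin d → ℝ)) →L[ℝ] ℝ)
    (hL : ∀ g ∈ G, 0 ≤ L (cf d g)) (ha : L ((1:ℝ), (0 : Fin d → ℝ)) = 0)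
    {t0 : Fin d → ℝ} (ht0 : t0 ∈ {t : Fin d → ℝ | ∀ g ∈ G, 0 ≤ eval t g})
    (s : ℝ) (hs : 0 ≤ s) :
    t0 + s • (fun i => L ((0:ℝ), (Pi.single i 1 : Fin d → ℝ)))
      ∈ {t : Fin d → ℝ | ∀ g ∈ G, 0 ≤ eval t g} := by
  intro g hg
  set v : Fin d → ℝ := fun i => L ((0:ℝ), (Pi.single i 1 : Fin d → ℝ)) with hv
  rw [eval_eq_evB (hG g hg)]
  have hL' : L (cf d g) = ∑ i, (cf d g).2 i * v i := by
    rw [L_expand, ha, mul_zero, zero_add]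
  have : evB d (t0 + s • v) (cf d g) = evB d t0 (cf d g) + s * L (cf d g) := by
    rw [hL']
    simp only [evB, Pi.add_apply, Pi.smul_apply, smul_eq_mul, mul_add, Finset.sum_add_distrib,
      Finset.mul_sum]
    ring_nf
    congr 1
    exact Finset.sum_congr rfl (fun i _ => by ring)
  rw [this, ← eval_eq_evB (hG g hg)]
  have h1 := ht0 g hg
  have h2 := hL g hg
  positivity

lemma mem_closure_CE (hG : ∀ g ∈ G, g.totalDegree ≤ 1)
    (hKne : {t : Fin d → ℝ | ∀ g ∈ G, 0 ≤ eval t g}.Nonempty)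
    (hKc : IsCompact {t : Fin d → ℝ | ∀ g ∈ G, 0 ≤ eval t g})
    (w : ℝ × (Fin d → ℝ))
    (hw : ∀ t ∈ {t : Fin d → ℝ | ∀ g ∈ G, 0 ≤ eval t g}, 0 < evB d t w) :
    w ∈ closure (CE d G : Set (ℝ × (Fin d → ℝ))) := by
  by_contra hcn
  obtain ⟨L, u, hLw, hub⟩ := geometric_hahn_banach_point_closed
    (CE_convex.closure) isClosed_closure hcn
  have hu0 : u < 0 := by
    simpa using hub 0 (subset_closure (Submodule.zero_mem _))
  have hpos : ∀ b ∈ CE d G, 0 ≤ L b := by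
    intro b hb
    by_contra hneg
    push_neg at hneg
    have hr : 0 ≤ u / L b := by
      have := div_nonneg (neg_nonneg.mpr hu0.le) (neg_nonneg.mpr hneg.le)
      rwa [neg_div_neg_eq] at this
    have hmem : (u / L b) • b ∈ CE d G := by
      rw [← smul_nn _ hr]; exact Submodule.smul_mem _ _ hb
    have := hub _ (subset_closure hmem)
    rw [map_smul, smul_eq_mul, div_mul_cancel₀ _ (ne_of_lt hneg)] at this
    exact lt_irrefl u this
  have ha : 0 ≤ L ((1:ℝ), (0 : Fin d → ℝ)) := hpos _ one_mem_CE
  set a : ℝ := L ((1:ℝ), (0 : Fin d → ℝ)) with haa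
  set v : Fin d → ℝ := fun i => L ((0:ℝ), (Pi.single i 1 : Fin d → ℝ)) with hvv
  have hLw0 : L w < 0 := hLw.trans hu0
  rcases ha.lt_or_eq with hapos | ha0
  · have key : ∀ z : ℝ × (Fin d → ℝ),
        evB d (fun i => L ((0:ℝ), (Pi.single i 1 : Fin d → ℝ)) / a) z = L z / a := by
      intro z
      rw [L_expand, ← haa, add_div, Finset.sum_div, mul_div_assoc,
        div_self (ne_of_gt hapos), mul_one]
      simp only [evB]
      refine congrArg _ (Finset.sum_congr rfl fun i _ => ?_)
      rw [mul_div_assoc]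
    set t : Fin d → ℝ := fun i => L ((0:ℝ), (Pi.single i 1 : Fin d → ℝ)) / a with ht
    have htK : t ∈ {t : Fin d → ℝ | ∀ g ∈ G, 0 ≤ eval t g} := by
      intro g hg
      rw [eval_eq_evB (hG g hg), key]
      exact div_nonneg (hpos _ (cf_mem_CE hg)) hapos.le
    have h1 := hw t htK
    rw [key] at h1
    have := div_neg_of_neg_of_pos hLw0 hapos
    linarith
  · by_cases hv : v = 0
    · have : L w = 0 := by
        rw [L_expand, ← haa, ← ha0, mul_zero, zero_add]
        refine Finset.sum_eq_zero fun i _ => ?_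
        have : v i = 0 := by rw [hv]; rfl
        rw [show L ((0:ℝ), (Pi.single i 1 : Fin d → ℝ)) = v i from rfl, this, mul_zero]
      linarith
    · obtain ⟨t0, ht0⟩ := hKne
      exact ray_false hKc ht0 hv
        (fun s hs => ray_in_K hG L (fun g hg => hpos _ (cf_mem_CE hg)) ha0.symm ht0 s hs)

lemma span_CE_top (hG : ∀ g ∈ G, g.totalDegree ≤ 1)
    (hKne : {t : Fin d → ℝ | ∀ g ∈ G, 0 ≤ eval t g}.Nonempty)
    (hKc : IsCompact {t : Fin d → ℝ | ∀ g ∈ G, 0 ≤ eval t g}) :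
    Submodule.span ℝ (CE d G : Set (ℝ × (Fin d → ℝ))) = ⊤ := by
  by_contra h
  have hex : ∃ x, x ∉ Submodule.span ℝ (CE d G : Set (ℝ × (Fin d → ℝ))) := by
    by_contra h'
    push_neg at h'
    exact h (Submodule.eq_top_iff'.mpr h')
  obtain ⟨x, hx⟩ := hex
  have hclosed : IsClosed ((Submodule.span ℝ (CE d G : Set (ℝ × (Fin d → ℝ)))) :
      Set (ℝ × (Fin d → ℝ))) :=
    Submodule.closed_of_finiteDimensional _
  obtain ⟨L, u, hLx, hub⟩ :=
    geometric_hahn_banach_point_closed (Submodule.convex _) hclosed hx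
  have hzero : ∀ y ∈ Submodule.span ℝ (CE d G : Set (ℝ × (Fin d → ℝ))), L y = 0 := by
    intro y hy
    by_contra hy0
    have hmem := Submodule.smul_mem (Submodule.span ℝ (CE d G : Set (ℝ × (Fin d → ℝ))))
      ((u - 1) / L y) hy
    have := hub _ hmem
    rw [map_smul, smul_eq_mul, div_mul_cancel₀ _ hy0] at this
    linarith
  have hu0 : u < 0 := by simpa using hub 0 (Submodule.zero_mem _)
  have hL0 : ∀ b ∈ CE d G, L b = 0 := fun b hb => hzero b (Submodule.subset_span hb)
  have ha0 : L ((1:ℝ), (0 : Fin d → ℝ)) = 0 := hL0 _ one_mem_CE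
  by_cases hv : (fun i => L ((0:ℝ), (Pi.single i 1 : Fin d → ℝ))) = (0 : Fin d → ℝ)
  · have hx0 : L x = 0 := by
      rw [L_expand, ha0, mul_zero, zero_add]
      refine Finset.sum_eq_zero fun i _ => ?_
      have := congrFun hv i
      simp only [Pi.zero_apply] at this
      rw [this, mul_zero]
    linarith [hLx, hu0, hx0]
  · obtain ⟨t0, ht0⟩ := hKne
    exact ray_false hKc ht0 hv
      (fun s hs => ray_in_K hG L (fun g hg => le_of_eq (hL0 _ (cf_mem_CE hg)).symm)
        ha0 ht0 s hs)

lemma pos_mem_CE (hG : ∀ g ∈ G, g.totalDegree ≤ 1)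
    (hKne : {t : Fin d → ℝ | ∀ g ∈ G, 0 ≤ eval t g}.Nonempty)
    (hKc : IsCompact {t : Fin d → ℝ | ∀ g ∈ G, 0 ≤ eval t g})
    (w : ℝ × (Fin d → ℝ))
    (hw : ∀ t ∈ {t : Fin d → ℝ | ∀ g ∈ G, 0 ≤ eval t g}, 1 ≤ evB d t w) :
    w ∈ CE d G := by
  have hspan := span_CE_top hG hKne hKc
  have haff : affineSpan ℝ (CE d G : Set (ℝ × (Fin d → ℝ))) = ⊤ := by
    have h0 : (0 : ℝ × (Fin d → ℝ)) ∈ (CE d G : Set (ℝ × (Fin d → ℝ))) := Submodule.zero_mem _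
    rw [AffineSubspace.affineSpan_eq_top_iff_vectorSpan_eq_top_of_nonempty ℝ (ℝ × (Fin d → ℝ))
      (ℝ × (Fin d → ℝ)) ⟨0, h0⟩]
    rw [eq_top_iff, ← hspan]
    apply Submodule.span_le.mpr
    intro y hy
    have := vsub_mem_vectorSpan ℝ hy h0
    simpa using this
  obtain ⟨y, hy⟩ := (CE_convex (G := G)).interior_nonempty_iff_affineSpan_eq_top.mpr haff
  have hcont : Continuous fun t : Fin d → ℝ => evB d t y := by
    simp only [evB]
    fun_prop
  obtain ⟨Cb, hCb⟩ := hKc.exists_bound_of_continuousOn hcont.continuousOn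
  set B : ℝ := |Cb| + 1 with hB
  have hB0 : (0:ℝ) < B := by positivity
  have hBb : ∀ t ∈ {t : Fin d → ℝ | ∀ g ∈ G, 0 ≤ eval t g}, |evB d t y| ≤ B := by
    intro t ht
    have := hCb t ht
    rw [Real.norm_eq_abs] at this
    calc |evB d t y| ≤ Cb := this
      _ ≤ |Cb| := le_abs_self _
      _ ≤ B := by rw [hB]; linarith
  set θ : ℝ := 1 / (2 * B) with hθ
  have hθ0 : (0:ℝ) < θ := by positivity
  have hθB : θ * B = 1 / 2 := by
    rw [hθ]
    field_simp <;> ring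
  set z : ℝ × (Fin d → ℝ) := (1 + θ) • w + (-θ) • y with hzdef
  have hz : z ∈ closure (CE d G : Set (ℝ × (Fin d → ℝ))) := by
    apply mem_closure_CE hG hKne hKc
    intro t ht
    rw [hzdef, evB_add, evB_smul, evB_smul]
    have h1 := hw t ht
    have h2 := abs_le.mp (hBb t ht)
    nlinarith
  have h1θ : (0:ℝ) < 1 + θ := by linarith
  have hcombo : (θ / (1 + θ)) • y + (1 / (1 + θ)) • z = w := by
    rw [hzdef, smul_add, smul_smul, smul_smul, ← add_assoc,
      show (1 / (1 + θ)) * (1 + θ) = 1 by field_simp,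
      add_comm ((θ / (1 + θ)) • y) ((1:ℝ) • w), add_assoc, ← add_smul,
      show θ / (1 + θ) + 1 / (1 + θ) * -θ = 0 by field_simp <;> ring, zero_smul, add_zero,
      one_smul]
  have hmem := CE_convex.combo_interior_closure_mem_interior hy hz
    (a := θ / (1 + θ)) (b := 1 / (1 + θ)) (by positivity) (by positivity)
    (by field_simp <;> ring)
  rw [hcombo] at hmem
  exact interior_subset hmem

lemma toP_pair (c e : ℝ) (i : Fin d) :
    toP d (c, (Pi.single i e : Fin d → ℝ)) = C c + C e * X i := by
  unfold toP
  congr 1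
  rw [Finset.sum_eq_single i (fun j _ hji => by simp [Pi.single_eq_of_ne hji])
    (fun h => absurd (Finset.mem_univ i) h)]
  simp

lemma evB_pair (t : Fin d → ℝ) (c e : ℝ) (i : Fin d) :
    evB d t (c, (Pi.single i e : Fin d → ℝ)) = c + e * t i := by
  unfold evB
  congr 1
  rw [Finset.sum_eq_single i (fun j _ hji => by simp [Pi.single_eq_of_ne hji])
    (fun h => absurd (Finset.mem_univ i) h)]
  simp

lemma X_arch (hG : ∀ g ∈ G, g.totalDegree ≤ 1)
    (hKne : {t : Fin d → ℝ | ∀ g ∈ G, 0 ≤ eval t g}.Nonempty)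
    (hKc : IsCompact {t : Fin d → ℝ | ∀ g ∈ G, 0 ≤ eval t g}) (i : Fin d) :
    ∃ l : ℝ, 0 < l ∧ l • (1 : MvPolynomial (Fin d) ℝ) - X i ∈ semiringGen G ∧
      l • (1 : MvPolynomial (Fin d) ℝ) + X i ∈ semiringGen G := by
  obtain ⟨R, hR⟩ := isBounded_iff_forall_norm_le.mp hKc.isBounded
  obtain ⟨t0, ht0⟩ := id hKne
  have hR0 : (0:ℝ) ≤ R := le_trans (norm_nonneg t0) (hR t0 ht0)
  have hti : ∀ t ∈ {t : Fin d → ℝ | ∀ g ∈ G, 0 ≤ eval t g}, |t i| ≤ R := by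
    intro t ht
    calc |t i| = ‖t i‖ := (Real.norm_eq_abs _).symm
      _ ≤ ‖t‖ := norm_le_pi_norm t i
      _ ≤ R := hR t ht
  refine ⟨R + 1, by positivity, ?_, ?_⟩
  · have hmem : toP d ((R + 1 : ℝ), (Pi.single i (-1:ℝ) : Fin d → ℝ)) ∈ semiringGen G := by
      apply toP_mem_sg hG
      apply pos_mem_CE hG hKne hKc
      intro t ht
      rw [evB_pair]
      have := abs_le.mp (hti t ht)
      linarith
    rw [toP_pair] at hmem
    have : (R + 1 : ℝ) • (1 : MvPolynomial (Fin d) ℝ) - X i = C (R+1) + C (-1) * X i := by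
      rw [MvPolynomial.smul_eq_C_mul, mul_one, map_neg, map_one, neg_one_mul]
      ring
    rw [this]
    exact hmem
  · have hmem : toP d ((R + 1 : ℝ), (Pi.single i (1:ℝ) : Fin d → ℝ)) ∈ semiringGen G := by
      apply toP_mem_sg hG
      apply pos_mem_CE hG hKne hKc
      intro t ht
      rw [evB_pair]
      have := abs_le.mp (hti t ht)
      linarith
    rw [toP_pair] at hmem
    have : (R + 1 : ℝ) • (1 : MvPolynomial (Fin d) ℝ) + X i = C (R+1) + C 1 * X i := by
      rw [MvPolynomial.smul_eq_C_mul, mul_one, map_one, one_mul]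
    rw [this]
    exact hmem

end Stmt11Aux

open Stmt11Aux

theorem stmt_11 (d : ℕ) (G : Set (MvPolynomial (Fin d) ℝ))
    (hG : ∀ g ∈ G, g.totalDegree ≤ 1)
    (hKne : {t : Fin d → ℝ | ∀ g ∈ G, 0 ≤ eval t g}.Nonempty)
    (hKc : IsCompact {t : Fin d → ℝ | ∀ g ∈ G, 0 ≤ eval t g}) :
    ∀ p : MvPolynomial (Fin d) ℝ, ∃ l : ℝ, 0 < l ∧
      l • (1 : MvPolynomial (Fin d) ℝ) - p ∈ semiringGen G ∧
      l • (1 : MvPolynomial (Fin d) ℝ) + p ∈ semiringGen G := by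
  intro p
  induction p using MvPolynomial.induction_on with
  | C a =>
    refine ⟨|a| + 1, by positivity, ?_, ?_⟩
    · have : (|a| + 1) • (1 : MvPolynomial (Fin d) ℝ) - C a = (|a| + 1 - a) • 1 := by
        rw [MvPolynomial.smul_eq_C_mul, MvPolynomial.smul_eq_C_mul, mul_one, mul_one, ← map_sub]
      rw [this]
      exact sg_smul (by linarith [le_abs_self a]) sg_one
    · have : (|a| + 1) • (1 : MvPolynomial (Fin d) ℝ) + C a = (|a| + 1 + a) • 1 := by
        rw [MvPolynomial.smul_eq_C_mul, MvPolynomial.smul_eq_C_mul, mul_one, mul_one, ← map_add]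
      rw [this]
      exact sg_smul (by linarith [neg_abs_le a]) sg_one
  | add p q hp hq =>
    obtain ⟨lp, hlp, hp1, hp2⟩ := hp
    obtain ⟨lq, hlq, hq1, hq2⟩ := hq
    refine ⟨lp + lq, by positivity, ?_, ?_⟩
    · have : (lp + lq) • (1 : MvPolynomial (Fin d) ℝ) - (p + q)
          = (lp • 1 - p) + (lq • 1 - q) := by
        rw [add_smul]; ring
      rw [this]
      exact sg_add hp1 hq1
    · have : (lp + lq) • (1 : MvPolynomial (Fin d) ℝ) + (p + q)
          = (lp • 1 + p) + (lq • 1 + q) := by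
        rw [add_smul]; ring
      rw [this]
      exact sg_add hp2 hq2
  | mul_X p i hp =>
    obtain ⟨lp, hlp, hp1, hp2⟩ := hp
    obtain ⟨li, hli, hi1, hi2⟩ := X_arch hG hKne hKc i
    refine ⟨lp * li, by positivity, ?_, ?_⟩
    · have hid : (lp • 1 - p) * (li • 1 + X i) + (lp • 1 + p) * (li • 1 - X i)
          = (2 : ℝ) • ((lp * li) • (1 : MvPolynomial (Fin d) ℝ) - p * X i) := by
        simp only [MvPolynomial.smul_eq_C_mul, mul_one, map_mul]
        rw [map_ofNat]
        ring
      have h2 : (2 : ℝ)⁻¹ • ((2 : ℝ) • ((lp * li) • (1 : MvPolynomial (Fin d) ℝ) - p * X i))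
          = (lp * li) • (1 : MvPolynomial (Fin d) ℝ) - p * X i := by
        rw [smul_smul]
        norm_num
      rw [← h2, ← hid]
      exact sg_smul (by norm_num) (sg_add (sg_mul hp1 hi2) (sg_mul hp2 hi1))
    · have hid : (lp • 1 - p) * (li • 1 - X i) + (lp • 1 + p) * (li • 1 + X i)
          = (2 : ℝ) • ((lp * li) • (1 : MvPolynomial (Fin d) ℝ) + p * X i) := by
        simp only [MvPolynomial.smul_eq_C_mul, mul_one, map_mul]
        rw [map_ofNat]
        ring
      have h2 : (2 : ℝ)⁻¹ • ((2 : ℝ) • ((lp * li) • (1 : MvPolynomial (Fin d) ℝ) + p * X i))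
          = (lp * li) • (1 : MvPolynomial (Fin d) ℝ) + p * X i := by
        rw [smul_smul]
        norm_num
      rw [← h2, ← hid]
      exact sg_smul (by norm_num) (sg_add (sg_mul hp1 hi1) (sg_mul hp2 hi2))
end

section
/- Let S be a semiring of a commutative unital ℝ-algebra A. Suppose A is generated as an algebra by finitely many elements y_1,...,y_n, and there exist a_1,...,a_n ∈ S with a_j - y_j ∈ S and a_j + y_j ∈ S for all j. Then S is generating (S - S = A) and s := 1 + Σ_{j=1}^n a_j is cofinal in A, i.e., for every a ∈ A there exist λ > 0 and k ∈ ℕ with λ s^k - a ∈ S. -/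
theorem stmt_12 {A : Type*} [CommRing A] [Algebra ℝ A] (S : Set A)
    (hone : (1 : A) ∈ S)
    (hadd : ∀ x ∈ S, ∀ y ∈ S, x + y ∈ S)
    (hsmul : ∀ r : ℝ, 0 ≤ r → ∀ x ∈ S, r • x ∈ S)
    (hmul : ∀ x ∈ S, ∀ y ∈ S, x * y ∈ S)
    (n : ℕ) (y : Fin n → A)
    (hgen : Algebra.adjoin ℝ (Set.range y) = ⊤)
    (a : Fin n → A) (ha : ∀ j, a j ∈ S)
    (h1 : ∀ j, a j - y j ∈ S) (h2 : ∀ j, a j + y j ∈ S) :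
    (∀ x : A, ∃ u ∈ S, ∃ v ∈ S, x = u - v) ∧
    (∀ x : A, ∃ l : ℝ, 0 < l ∧ ∃ k : ℕ,
      l • (1 + ∑ j : Fin n, a j) ^ k - x ∈ S) := by
  set s : A := 1 + ∑ j : Fin n, a j with hs_def
  have hzero : (0 : A) ∈ S := by simpa using hsmul 0 le_rfl 1 hone
  have hsumt : ∀ t : Finset (Fin n), (∑ j ∈ t, a j) ∈ S := by
    intro t
    exact Finset.sum_induction _ (· ∈ S) (fun x y hx hy => hadd x hx y hy) hzero
      (fun i _ => ha i)
  have hsum : (∑ j : Fin n, a j) ∈ S := hsumt Finset.univ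
  have hs : s ∈ S := hadd 1 hone _ hsum
  have hpow : ∀ k : ℕ, s ^ k ∈ S := by
    intro k
    induction k with
    | zero => simpa using hone
    | succ k ih => rw [pow_succ]; exact hmul _ ih _ hs
  have hmono : ∀ k m : ℕ, k ≤ m → s ^ m - s ^ k ∈ S := by
    intro k m hkm
    induction m, hkm using Nat.le_induction with
    | base => simpa using hzero
    | succ m hm ih =>
      have h1' : s ^ (m + 1) - s ^ m ∈ S := by
        have he : s ^ (m + 1) - s ^ m = s ^ m * (∑ j : Fin n, a j) := by
          rw [hs_def]; ring
        rw [he]; exact hmul _ (hpow m) _ hsum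
      have := hadd _ h1' _ ih
      rwa [sub_add_sub_cancel] at this
  have hP : ∀ x : A, ∃ l : ℝ, 0 < l ∧ ∃ k : ℕ,
      l • s ^ k - x ∈ S ∧ l • s ^ k + x ∈ S := by
    intro x
    have hx : x ∈ Algebra.adjoin ℝ (Set.range y) := by rw [hgen]; trivial
    induction hx using Algebra.adjoin_induction with
    | mem z hz =>
      obtain ⟨j, rfl⟩ := hz
      refine ⟨1, one_pos, 1, ?_, ?_⟩
      · have he : (1 : ℝ) • s ^ 1 - y j
            = (1 + (a j - y j)) + ∑ i ∈ Finset.univ.erase j, a i := by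
          rw [one_smul, pow_one, hs_def, ← Finset.add_sum_erase _ a (Finset.mem_univ j)]
          ring
        rw [he]
        exact hadd _ (hadd 1 hone _ (h1 j)) _ (hsumt _)
      · have he : (1 : ℝ) • s ^ 1 + y j
            = (1 + (a j + y j)) + ∑ i ∈ Finset.univ.erase j, a i := by
          rw [one_smul, pow_one, hs_def, ← Finset.add_sum_erase _ a (Finset.mem_univ j)]
          ring
        rw [he]
        exact hadd _ (hadd 1 hone _ (h2 j)) _ (hsumt _)
    | algebraMap r =>
      refine ⟨|r| + 1, by positivity, 0, ?_, ?_⟩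
      · have he : (|r| + 1 : ℝ) • s ^ 0 - algebraMap ℝ A r = (|r| + 1 - r) • (1 : A) := by
          rw [pow_zero, Algebra.algebraMap_eq_smul_one, ← sub_smul]
        rw [he]
        exact hsmul _ (by nlinarith [le_abs_self r]) _ hone
      · have he : (|r| + 1 : ℝ) • s ^ 0 + algebraMap ℝ A r = (|r| + 1 + r) • (1 : A) := by
          rw [pow_zero, Algebra.algebraMap_eq_smul_one, ← add_smul]
        rw [he]
        exact hsmul _ (by nlinarith [neg_abs_le r]) _ hone
    | add u v hu hv ihu ihv =>
      obtain ⟨l1, hl1, k1, hm1, hp1⟩ := ihu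
      obtain ⟨l2, hl2, k2, hm2, hp2⟩ := ihv
      refine ⟨l1 + l2, by positivity, max k1 k2, ?_, ?_⟩
      · have he : (l1 + l2) • s ^ max k1 k2 - (u + v)
            = (l1 • s ^ k1 - u) + (l2 • s ^ k2 - v)
              + l1 • (s ^ max k1 k2 - s ^ k1) + l2 • (s ^ max k1 k2 - s ^ k2) := by
          module
        rw [he]
        exact hadd _ (hadd _ (hadd _ hm1 _ hm2) _
          (hsmul _ hl1.le _ (hmono _ _ (le_max_left _ _)))) _
          (hsmul _ hl2.le _ (hmono _ _ (le_max_right _ _)))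
      · have he : (l1 + l2) • s ^ max k1 k2 + (u + v)
            = (l1 • s ^ k1 + u) + (l2 • s ^ k2 + v)
              + l1 • (s ^ max k1 k2 - s ^ k1) + l2 • (s ^ max k1 k2 - s ^ k2) := by
          module
        rw [he]
        exact hadd _ (hadd _ (hadd _ hp1 _ hp2) _
          (hsmul _ hl1.le _ (hmono _ _ (le_max_left _ _)))) _
          (hsmul _ hl2.le _ (hmono _ _ (le_max_right _ _)))
    | mul u v hu hv ihu ihv =>
      obtain ⟨l1, hl1, k1, hm1, hp1⟩ := ihu
      obtain ⟨l2, hl2, k2, hm2, hp2⟩ := ihv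
      refine ⟨l1 * l2, by positivity, k1 + k2, ?_, ?_⟩
      · have he : (l1 * l2) • s ^ (k1 + k2) - u * v
            = (1 / 2 : ℝ) • ((l1 • s ^ k1 - u) * (l2 • s ^ k2 + v)
              + (l1 • s ^ k1 + u) * (l2 • s ^ k2 - v)) := by
          have h2' : (l1 • s ^ k1 - u) * (l2 • s ^ k2 + v)
              + (l1 • s ^ k1 + u) * (l2 • s ^ k2 - v)
              = (2 : ℝ) • ((l1 * l2) • s ^ (k1 + k2) - u * v) := by
            simp only [Algebra.smul_def, map_mul, map_ofNat, pow_add]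
            ring
          rw [h2', smul_smul]
          norm_num
        rw [he]
        exact hsmul _ (by norm_num) _ (hadd _ (hmul _ hm1 _ hp2) _ (hmul _ hp1 _ hm2))
      · have he : (l1 * l2) • s ^ (k1 + k2) + u * v
            = (1 / 2 : ℝ) • ((l1 • s ^ k1 - u) * (l2 • s ^ k2 - v)
              + (l1 • s ^ k1 + u) * (l2 • s ^ k2 + v)) := by
          have h2' : (l1 • s ^ k1 - u) * (l2 • s ^ k2 - v)
              + (l1 • s ^ k1 + u) * (l2 • s ^ k2 + v)
              = (2 : ℝ) • ((l1 * l2) • s ^ (k1 + k2) + u * v) := by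
            simp only [Algebra.smul_def, map_mul, map_ofNat, pow_add]
            ring
          rw [h2', smul_smul]
          norm_num
        rw [he]
        exact hsmul _ (by norm_num) _ (hadd _ (hmul _ hm1 _ hm2) _ (hmul _ hp1 _ hp2))
  constructor
  · intro x
    obtain ⟨l, hl, k, hm, -⟩ := hP x
    exact ⟨l • s ^ k, hsmul l hl.le _ (hpow k), l • s ^ k - x, hm, by ring⟩
  · intro x
    obtain ⟨l, hl, k, hm, -⟩ := hP x
    exact ⟨l, hl, k, hm⟩
end

section
/- Let S be a semiring of A and s ∈ 1 + S a cofinal element. Then S† = {a ∈ A : there exists n ∈ ℕ such that a + ε s^n ∈ S for all ε > 0}. -/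
theorem stmt_13 {A : Type*} [CommRing A] [Algebra ℝ A] (S : Set A)
    (hone : (1 : A) ∈ S)
    (hadd : ∀ x ∈ S, ∀ y ∈ S, x + y ∈ S)
    (hsmul : ∀ r : ℝ, 0 ≤ r → ∀ x ∈ S, r • x ∈ S)
    (hmul : ∀ x ∈ S, ∀ y ∈ S, x * y ∈ S)
    (s : A) (hs : s - 1 ∈ S)
    (hcofinal : ∀ a : A, ∃ l : ℝ, 0 < l ∧ ∃ k : ℕ, l • s ^ k - a ∈ S) :
    {a : A | ∃ b ∈ S, ∀ ε : ℝ, 0 < ε → a + ε • b ∈ S}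
      = {a : A | ∃ n : ℕ, ∀ ε : ℝ, 0 < ε → a + ε • s ^ n ∈ S} := by
  ext a
  simp only [Set.mem_setOf_eq]
  constructor
  · rintro ⟨b, hb, hab⟩
    obtain ⟨l, hl, k, hk⟩ := hcofinal b
    refine ⟨k, fun ε hε => ?_⟩
    have h1 := hab (ε / l) (by positivity)
    have h2 := hsmul (ε / l) (by positivity) _ hk
    have h3 := hadd _ h1 _ h2
    have heq : a + (ε / l) • b + (ε / l) • (l • s ^ k - b) = a + ε • s ^ k := by
      rw [smul_sub, smul_smul, div_mul_cancel₀ _ hl.ne']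
      abel
    rwa [heq] at h3
  · rintro ⟨n, hn⟩
    have hs' : s ∈ S := by
      have := hadd _ hs _ hone
      simpa using this
    have hpow : ∀ m : ℕ, s ^ m ∈ S := by
      intro m
      induction m with
      | zero => simpa using hone
      | succ m ih => rw [pow_succ]; exact hmul _ ih _ hs'
    exact ⟨s ^ n, hpow n, hn⟩
end

section
/- Let A be a filtered commutative unital ℝ-algebra with filtration (A^(k))_{k∈ℕ₀}. Define A^(0)_0 := {0} and, for k ≥ 1, A^(k)_0 := {a ∈ A^(k) : ∃m ∈ ℕ with a^m ∈ A^(km-1)}. Then A^(k)_0 is a linear subspace of A^(k) for every k, and A^(k)_0 · A^(ℓ) ⊆ A^(k+ℓ)_0 for all k, ℓ ∈ ℕ₀. -/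
theorem stmt_15 {A : Type*} [CommRing A] [Algebra ℝ A]
    (F : ℕ → Submodule ℝ A)
    (hone : (1 : A) ∈ F 0)
    (hmono : ∀ k : ℕ, F k ≤ F (k + 1))
    (hmul : ∀ k l : ℕ, ∀ a b : A, a ∈ F k → b ∈ F l → a * b ∈ F (k + l))
    (hcover : ∀ a : A, ∃ k : ℕ, a ∈ F k)
    (F0 : ℕ → Set A)
    (hF00 : F0 0 = {0})
    (hF0k : ∀ k : ℕ, 1 ≤ k →
      F0 k = {a : A | a ∈ F k ∧ ∃ m : ℕ, 1 ≤ m ∧ a ^ m ∈ F (k * m - 1)}) :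
    (∀ k : ℕ, ∃ W : Submodule ℝ A, (W : Set A) = F0 k ∧ W ≤ F k) ∧
    (∀ k l : ℕ, ∀ a b : A, a ∈ F0 k → b ∈ F l → a * b ∈ F0 (k + l)) := by
  -- generalized monotonicity
  have mono : ∀ i j : ℕ, i ≤ j → F i ≤ F j := by
    intro i j hij
    induction j with
    | zero => simpa [Nat.le_zero.mp hij] using le_refl (F 0)
    | succ n ih =>
      rcases Nat.lt_or_ge i (n+1) with h | h
      · exact (ih (Nat.lt_succ_iff.mp h)).trans (hmono n)
      · have : i = n + 1 := le_antisymm hij h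
        simp [this]
  -- powers
  have pow_mem : ∀ (k : ℕ) (a : A), a ∈ F k → ∀ n : ℕ, a ^ n ∈ F (k * n) := by
    intro k a ha n
    induction n with
    | zero => simpa using mono 0 (k*0) (by omega) hone
    | succ n ih =>
      have := hmul (k*n) k _ _ ih ha
      simpa [pow_succ, Nat.mul_succ] using this
  -- key: low powers propagate upwards
  have key : ∀ (k m : ℕ) (a : A), 1 ≤ k → 1 ≤ m → a ∈ F k →
      a ^ m ∈ F (k * m - 1) → ∀ i : ℕ, m ≤ i → a ^ i ∈ F (k * i - 1) := by
    intro k m a hk hm ha hpm i hi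
    have h1 : a ^ i = a ^ m * a ^ (i - m) := by
      rw [← pow_add]; congr 1; omega
    have h2 := hmul (k*m-1) (k*(i-m)) _ _ hpm (pow_mem k a ha (i-m))
    have h3 : k * m - 1 + k * (i - m) = k * i - 1 := by
      have hkm : 1 ≤ k * m := Nat.one_le_iff_ne_zero.mpr (by positivity)
      have : k * m + k * (i - m) = k * i := by
        rw [← Nat.mul_add]; congr 1; omega
      omega
    rw [h1]; rw [h3] at h2; exact h2
  have zero_mem0 : ∀ k : ℕ, (0 : A) ∈ F0 k := by
    intro k
    rcases Nat.eq_zero_or_pos k with rfl | hk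
    · simp [hF00]
    · rw [hF0k k hk]
      exact ⟨(F k).zero_mem, 1, le_refl 1, by simpa using (F (k*1-1)).zero_mem⟩
  constructor
  · intro k
    rcases Nat.eq_zero_or_pos k with rfl | hk
    · exact ⟨⊥, by simp [hF00], bot_le⟩
    · refine ⟨{ carrier := F0 k, zero_mem' := zero_mem0 k, add_mem' := ?_, smul_mem' := ?_ },
        rfl, ?_⟩
      · rintro a b ha hb
        rw [hF0k k hk] at ha hb ⊢
        obtain ⟨haF, m, hm, ham⟩ := ha
        obtain ⟨hbF, n, hn, hbn⟩ := hb
        refine ⟨(F k).add_mem haF hbF, m + n - 1, by omega, ?_⟩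
        rw [add_pow]
        apply Submodule.sum_mem
        intro i hi
        simp only [Finset.mem_range] at hi
        have hterm : a ^ i * b ^ (m + n - 1 - i) ∈ F (k * (m + n - 1) - 1) := by
          rcases Nat.lt_or_ge i m with him | him
          · -- then m+n-1-i ≥ n
            have h1 : a ^ i ∈ F (k * i) := pow_mem k a haF i
            have h2 : b ^ (m+n-1-i) ∈ F (k * (m+n-1-i) - 1) :=
              key k n b hk hn hbF hbn _ (by omega)
            have h3 := hmul _ _ _ _ h1 h2
            have harith : k * i + (k * (m+n-1-i) - 1) = k * (m+n-1) - 1 := by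
              have hkn : 1 ≤ k * (m+n-1-i) :=
                Nat.one_le_iff_ne_zero.mpr (Nat.mul_ne_zero (by omega) (by omega))
              have : k * i + k * (m+n-1-i) = k * (m+n-1) := by
                rw [← Nat.mul_add]; congr 1; omega
              omega
            rwa [harith] at h3
          · have h1 : a ^ i ∈ F (k * i - 1) := key k m a hk hm haF ham i him
            have h2 : b ^ (m+n-1-i) ∈ F (k * (m+n-1-i)) := pow_mem k b hbF _
            have h3 := hmul _ _ _ _ h1 h2
            have harith : (k * i - 1) + k * (m+n-1-i) = k * (m+n-1) - 1 := by
              have hki : 1 ≤ k * i :=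
                Nat.one_le_iff_ne_zero.mpr (Nat.mul_ne_zero (by omega) (by omega))
              have : k * i + k * (m+n-1-i) = k * (m+n-1) := by
                rw [← Nat.mul_add]; congr 1; omega
              omega
            rwa [harith] at h3
        have : a ^ i * b ^ (m + n - 1 - i) * ((m + n - 1).choose i : A)
            = ((m + n - 1).choose i) • (a ^ i * b ^ (m + n - 1 - i)) := by
          rw [nsmul_eq_mul, mul_comm]
        rw [this]
        exact nsmul_mem hterm _
      · intro c a ha
        show c • a ∈ F0 k
        have ha' : a ∈ F0 k := ha
        rw [hF0k k hk] at ha' ⊢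
        obtain ⟨haF, m, hm, ham⟩ := ha'
        refine ⟨(F k).smul_mem c haF, m, hm, ?_⟩
        rw [smul_pow]
        exact (F _).smul_mem _ ham
      · intro x hx
        have hx' : x ∈ F0 k := hx
        rw [hF0k k hk] at hx'
        exact hx'.1
  · intro k l a b ha hb
    rcases Nat.eq_zero_or_pos k with rfl | hk
    · rw [hF00] at ha
      simp only [Set.mem_singleton_iff] at ha
      subst ha
      simpa using zero_mem0 l
    · rw [hF0k k hk] at ha
      obtain ⟨haF, m, hm, ham⟩ := ha
      rw [hF0k (k+l) (by omega)]
      refine ⟨hmul k l a b haF hb, m, hm, ?_⟩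
      rw [mul_pow]
      have h2 : b ^ m ∈ F (l * m) := pow_mem l b hb m
      have h3 := hmul _ _ _ _ ham h2
      have harith : k * m - 1 + l * m = (k+l) * m - 1 := by
        have : 1 ≤ k * m := Nat.one_le_iff_ne_zero.mpr (by positivity)
        have h4 : k * m + l * m = (k+l)*m := by ring
        omega
      rwa [harith] at h3
end

section
/- Let A be a filtered commutative unital ℝ-algebra and A[z]^bd the unital subalgebra of the polynomial algebra A[z] generated by ⋃_{k∈ℕ₀}{a z^k : a ∈ A^(k)}. If ρ : A[z]^bd → ℝ is a unital algebra homomorphism with ρ(z) ≠ 0, then there exists a unique unital algebra homomorphism ρ̂ : A → ℝ such that ρ(a z^k) = ρ̂(a) · ρ(z)^k for all k ∈ ℕ₀ and a ∈ A^(k). -/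
open Polynomial

theorem stmt_16 {A : Type*} [CommRing A] [Algebra ℝ A]
    (F : ℕ → Submodule ℝ A)
    (hone : (1 : A) ∈ F 0)
    (hmono : ∀ k : ℕ, F k ≤ F (k + 1))
    (hmulF : ∀ k l : ℕ, ∀ a b : A, a ∈ F k → b ∈ F l → a * b ∈ F (k + l))
    (hcover : ∀ a : A, ∃ k : ℕ, a ∈ F k)
    (B : Subalgebra ℝ (Polynomial A))
    (hB : B = Algebra.adjoin ℝ
      {p : Polynomial A | ∃ (k : ℕ) (a : A), a ∈ F k ∧ p = Polynomial.C a * X ^ k})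
    (hz : (X : Polynomial A) ∈ B)
    (hmem : ∀ (k : ℕ) (a : A), a ∈ F k → (Polynomial.C a * X ^ k : Polynomial A) ∈ B)
    (ρ : B →ₐ[ℝ] ℝ)
    (hρz : ρ ⟨X, hz⟩ ≠ 0) :
    ∃! ρhat : A →ₐ[ℝ] ℝ, ∀ (k : ℕ) (a : A) (h : a ∈ F k),
      ρ ⟨Polynomial.C a * X ^ k, hmem k a h⟩ = ρhat a * (ρ ⟨X, hz⟩) ^ k := by
  set z0 := ρ ⟨X, hz⟩ with hz0
  have hFle : ∀ {k l : ℕ}, k ≤ l → F k ≤ F l := by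
    intro k l hkl
    induction hkl with
    | refl => exact le_rfl
    | step _ ih => exact le_trans ih (hmono _)
  -- key step lemma
  have key : ∀ (k m : ℕ) (a : A) (h : a ∈ F k),
      ρ ⟨Polynomial.C a * X ^ (k + m), hmem _ _ (hFle (Nat.le_add_right k m) h)⟩ =
        ρ ⟨Polynomial.C a * X ^ k, hmem k a h⟩ * z0 ^ m := by
    intro k m a h
    induction m with
    | zero => simp
    | succ n ih =>
        have heq : (⟨Polynomial.C a * X ^ (k + (n+1)),
            hmem _ _ (hFle (Nat.le_add_right k (n+1)) h)⟩ : B) =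
            (⟨Polynomial.C a * X ^ (k + n), hmem _ _ (hFle (Nat.le_add_right k n) h)⟩ : B) *
              ⟨X, hz⟩ := by
          apply Subtype.ext
          show Polynomial.C a * X ^ (k + (n+1)) = (Polynomial.C a * X ^ (k + n)) * X
          ring
        rw [heq, map_mul, ih, pow_succ, ← hz0]
        ring
  -- well-definedness
  have wd : ∀ (k l : ℕ) (a : A) (hk : a ∈ F k) (hl : a ∈ F l),
      ρ ⟨Polynomial.C a * X ^ k, hmem k a hk⟩ / z0 ^ k =
        ρ ⟨Polynomial.C a * X ^ l, hmem l a hl⟩ / z0 ^ l := by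
    have half : ∀ (k l : ℕ) (a : A) (hk : a ∈ F k) (hl : a ∈ F l), k ≤ l →
        ρ ⟨Polynomial.C a * X ^ k, hmem k a hk⟩ / z0 ^ k =
          ρ ⟨Polynomial.C a * X ^ l, hmem l a hl⟩ / z0 ^ l := by
      intro k l a hk hl hkl
      obtain ⟨m, rfl⟩ := Nat.exists_eq_add_of_le hkl
      rw [key k m a hk]
      rw [pow_add]
      field_simp
    intro k l a hk hl
    rcases le_total k l with h | h
    · exact half k l a hk hl h
    · exact (half l k a hl hk h).symm
  -- the function
  set f : A → ℝ := fun a =>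
    ρ ⟨Polynomial.C a * X ^ (hcover a).choose, hmem _ _ (hcover a).choose_spec⟩ /
      z0 ^ (hcover a).choose with hf
  have fspec : ∀ (k : ℕ) (a : A) (h : a ∈ F k),
      f a = ρ ⟨Polynomial.C a * X ^ k, hmem k a h⟩ / z0 ^ k := by
    intro k a h
    exact wd _ k a (hcover a).choose_spec h
  have fmul : ∀ a b : A, f (a * b) = f a * f b := by
    intro a b
    obtain ⟨k, hk⟩ := hcover a
    obtain ⟨l, hl⟩ := hcover b
    rw [fspec (k + l) (a * b) (hmulF k l a b hk hl), fspec k a hk, fspec l b hl]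
    have heq : (⟨Polynomial.C (a * b) * X ^ (k + l), hmem _ _ (hmulF k l a b hk hl)⟩ : B) =
        (⟨Polynomial.C a * X ^ k, hmem k a hk⟩ : B) * ⟨Polynomial.C b * X ^ l, hmem l b hl⟩ := by
      apply Subtype.ext
      show Polynomial.C (a * b) * X ^ (k + l) =
        (Polynomial.C a * X ^ k) * (Polynomial.C b * X ^ l)
      rw [map_mul, pow_add]; ring
    rw [heq, map_mul, pow_add]
    have hzk : z0 ^ k ≠ 0 := pow_ne_zero _ hρz
    have hzl : z0 ^ l ≠ 0 := pow_ne_zero _ hρz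
    field_simp
  have fadd : ∀ a b : A, f (a + b) = f a + f b := by
    intro a b
    obtain ⟨k, hk⟩ := hcover a
    obtain ⟨l, hl⟩ := hcover b
    have hk' : a ∈ F (max k l) := hFle (le_max_left k l) hk
    have hl' : b ∈ F (max k l) := hFle (le_max_right k l) hl
    have hab : a + b ∈ F (max k l) := (F (max k l)).add_mem hk' hl'
    rw [fspec _ (a + b) hab, fspec _ a hk', fspec _ b hl']
    have heq : (⟨Polynomial.C (a + b) * X ^ (max k l), hmem _ _ hab⟩ : B) =
        (⟨Polynomial.C a * X ^ (max k l), hmem _ _ hk'⟩ : B) +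
          ⟨Polynomial.C b * X ^ (max k l), hmem _ _ hl'⟩ := by
      apply Subtype.ext
      show Polynomial.C (a + b) * X ^ (max k l) =
        Polynomial.C a * X ^ (max k l) + Polynomial.C b * X ^ (max k l)
      rw [map_add]; ring
    rw [heq, map_add, add_div]
  have fone : f 1 = 1 := by
    rw [fspec 0 1 hone]
    have heq : (⟨Polynomial.C (1:A) * X ^ 0, hmem 0 1 hone⟩ : B) = 1 := by
      apply Subtype.ext
      show Polynomial.C (1:A) * X ^ 0 = 1
      simp
    rw [heq, map_one]
    simp
  have fzero : f 0 = 0 := by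
    rw [fspec 0 0 (F 0).zero_mem]
    have heq : (⟨Polynomial.C (0:A) * X ^ 0, hmem 0 0 (F 0).zero_mem⟩ : B) = 0 := by
      apply Subtype.ext
      show Polynomial.C (0:A) * X ^ 0 = 0
      simp
    rw [heq, map_zero]
    simp
  have fcomm : ∀ r : ℝ, f (algebraMap ℝ A r) = r := by
    intro r
    have hr : algebraMap ℝ A r ∈ F 0 := by
      rw [Algebra.algebraMap_eq_smul_one]
      exact (F 0).smul_mem r hone
    rw [fspec 0 _ hr]
    have heq : (⟨Polynomial.C (algebraMap ℝ A r) * X ^ 0, hmem 0 _ hr⟩ : B) =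
        algebraMap ℝ B r := by
      apply Subtype.ext
      show Polynomial.C (algebraMap ℝ A r) * X ^ 0 = _
      simp [Polynomial.algebraMap_apply]
    rw [heq, AlgHom.commutes]
    simp
  set ρhat : A →ₐ[ℝ] ℝ :=
    { toFun := f
      map_one' := fone
      map_mul' := fmul
      map_zero' := fzero
      map_add' := fadd
      commutes' := fcomm } with hρhat
  refine ⟨ρhat, ?_, ?_⟩
  · intro k a h
    show ρ _ = f a * z0 ^ k
    rw [fspec k a h]
    field_simp
  · intro g hg
    ext a
    obtain ⟨k, hk⟩ := hcover a
    have h1 := hg k a hk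
    have h2 : ρ ⟨Polynomial.C a * X ^ k, hmem k a hk⟩ = f a * z0 ^ k := by
      rw [fspec k a hk]; field_simp
    have hzk : z0 ^ k ≠ 0 := pow_ne_zero _ hρz
    have : g a * z0 ^ k = f a * z0 ^ k := by rw [← h1, h2]
    exact mul_right_cancel₀ hzk this
end
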